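/- arXiv:1905.00777 — 4 statements merged into one kernel-verified Lean document; each statement's English description precedes it below -/
import Mathlib

section
/- Let a₂ > a₃ > 0 and γ > 0, and set A = √(a₂/2)·√γ and B = √(a₃/2)·√γ. Let W be a real Gaussian random variable with mean 0 and variance 1/2. Then (1/2)·[ ℙ( W < −(2A+B) ) + ℙ( −(2A−B) ≤ W < −(A−B) ) ] = (1/2)·[ Q(√(ζ₁ γ)) − Q(√(ζ₄ γ)) + Q(√(ζ₅ γ)) ], where ζ₁ = (√a₂ − √a₃)², ζ₄ = (2√a₂ − √a₃)², and ζ₅ = (2√a₂ + √a₃)². (Conditional bit error probability of user U₃ given that the symbols of U₂ are detected erroneously and subtracted in the SIC stage, Proposition 3, Eq. (26).) -/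
open MeasureTheory ProbabilityTheory Real

/-- The Gaussian Q-function: `Q x = (1/√(2π)) ∫_x^∞ e^{-t²/2} dt`. -/
noncomputable def gaussQ (x : ℝ) : ℝ :=
  (Real.sqrt (2 * Real.pi))⁻¹ * ∫ t in Set.Ioi x, Real.exp (-t ^ 2 / 2)

lemma gaussHalf_Iio (x : ℝ) :
    ((gaussianReal 0 (1/2)) (Set.Iio x)).toReal = gaussQ (Real.sqrt 2 * (-x)) := by
  rw [gaussianReal_apply_eq_integral 0 (by norm_num) _, ENNReal.toReal_ofReal
    (setIntegral_nonneg measurableSet_Iio fun t _ => gaussianPDFReal_nonneg 0 (1/2) t)]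
  have hpdf : ∀ t : ℝ, gaussianPDFReal 0 (1/2) t = (Real.sqrt π)⁻¹ * Real.exp (-t ^ 2) := by
    intro t
    rw [gaussianPDFReal]
    rw [show (2 * π * ((1/2 : NNReal) : ℝ)) = π by push_cast; ring,
      show (-(t - 0) ^ 2 / (2 * ((1/2 : NNReal) : ℝ))) = -t ^ 2 by push_cast; ring]
  simp_rw [hpdf]
  rw [integral_const_mul]
  have h1 : ∫ t in Set.Iio x, Real.exp (-t ^ 2)
      = ∫ t in Set.Ioi (-x), Real.exp (-t ^ 2) := by
    have key := integral_comp_neg_Iic x (fun t => Real.exp (-t ^ 2))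
    simp only [neg_sq] at key
    rw [← integral_Iic_eq_integral_Iio, key]
  have h2 : ∫ t in Set.Ioi (-x), Real.exp (-t ^ 2)
      = (Real.sqrt 2)⁻¹ * ∫ u in Set.Ioi (Real.sqrt 2 * (-x)), Real.exp (-u ^ 2 / 2) := by
    have hs2 : (0:ℝ) < Real.sqrt 2 := Real.sqrt_pos.mpr (by norm_num)
    have := integral_comp_mul_left_Ioi (fun u => Real.exp (-u ^ 2 / 2)) (-x) hs2
    rw [smul_eq_mul] at this
    rw [← this]
    refine setIntegral_congr_fun measurableSet_Ioi fun t _ => ?_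
    congr 1
    rw [mul_pow, Real.sq_sqrt (by norm_num : (0:ℝ) ≤ 2)]
    ring
  rw [h1, h2, gaussQ, ← mul_assoc]
  congr 1
  rw [← mul_inv, show (2:ℝ) * π = 2 * π from rfl,
    Real.sqrt_mul (by norm_num : (0:ℝ) ≤ 2) π]
  ring

lemma sqrt_sq_mul {c : ℝ} (hc : 0 ≤ c) (γ : ℝ) (hγ : 0 ≤ γ) :
    Real.sqrt (c ^ 2 * γ) = c * Real.sqrt γ := by
  rw [Real.sqrt_mul (sq_nonneg c), Real.sqrt_sq hc]

/-- Proposition 3 (Eq. (26)): conditional bit error probability of user U₃ given that the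
symbols of U₂ were detected erroneously and subtracted in the SIC stage. With
`A = √(a₂/2)√γ`, `B = √(a₃/2)√γ` and `W` Gaussian of mean 0 and variance 1/2,
`(1/2)[ℙ(W < −(2A+B)) + ℙ(−(2A−B) ≤ W < −(A−B))]
  = (1/2)[Q(√(ζ₁γ)) − Q(√(ζ₄γ)) + Q(√(ζ₅γ))]`,
with `ζ₁ = (√a₂ − √a₃)²`, `ζ₄ = (2√a₂ − √a₃)²`, `ζ₅ = (2√a₂ + √a₃)²`. -/
theorem stmt3 {Ω : Type*} [MeasurableSpace Ω] (μ : Measure Ω) [IsProbabilityMeasure μ]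
    (a₂ a₃ γ : ℝ) (ha : a₂ > a₃) (ha₃ : a₃ > 0) (hγ : 0 < γ)
    (A B : ℝ) (hA : A = Real.sqrt (a₂ / 2) * Real.sqrt γ)
    (hB : B = Real.sqrt (a₃ / 2) * Real.sqrt γ)
    (W : Ω → ℝ) (hWm : Measurable W) (hW : μ.map W = gaussianReal 0 (1 / 2))
    (ζ₁ ζ₄ ζ₅ : ℝ)
    (hζ₁ : ζ₁ = (Real.sqrt a₂ - Real.sqrt a₃) ^ 2)
    (hζ₄ : ζ₄ = (2 * Real.sqrt a₂ - Real.sqrt a₃) ^ 2)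
    (hζ₅ : ζ₅ = (2 * Real.sqrt a₂ + Real.sqrt a₃) ^ 2) :
    1 / 2 * ((μ {ω | W ω < -(2 * A + B)}).toReal
        + (μ {ω | -(2 * A - B) ≤ W ω ∧ W ω < -(A - B)}).toReal)
      = 1 / 2 * (gaussQ (Real.sqrt (ζ₁ * γ)) - gaussQ (Real.sqrt (ζ₄ * γ))
          + gaussQ (Real.sqrt (ζ₅ * γ))) := by
  have hprob : ∀ c : ℝ, (μ {ω | W ω < c}).toReal = gaussQ (Real.sqrt 2 * (-c)) := by
    intro c
    have : μ {ω | W ω < c} = (μ.map W) (Set.Iio c) := by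
      rw [Measure.map_apply hWm measurableSet_Iio]; rfl
    rw [this, hW, gaussHalf_Iio]
  -- half of amplitudes: positivity
  have hA2pos : (0:ℝ) < a₂ := lt_trans ha₃ ha
  have hApos : 0 < A := by
    rw [hA]
    exact mul_pos (Real.sqrt_pos.mpr (by linarith)) (Real.sqrt_pos.mpr hγ)
  have hle : -(2 * A - B) ≤ -(A - B) := by linarith
  -- measure of the Ico event
  have hIco : (μ {ω | -(2 * A - B) ≤ W ω ∧ W ω < -(A - B)}).toReal
      = (μ {ω | W ω < -(A - B)}).toReal - (μ {ω | W ω < -(2 * A - B)}).toReal := by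
    have hunion : {ω | W ω < -(2 * A - B)} ∪ {ω | -(2 * A - B) ≤ W ω ∧ W ω < -(A - B)}
        = {ω | W ω < -(A - B)} := by
      ext ω
      simp only [Set.mem_union, Set.mem_setOf_eq]
      constructor
      · rintro (h | ⟨_, h⟩)
        · exact lt_of_lt_of_le h hle
        · exact h
      · intro h
        rcases lt_or_ge (W ω) (-(2 * A - B)) with h' | h'
        · exact Or.inl h'
        · exact Or.inr ⟨h', h⟩
    have hdisj : Disjoint {ω | W ω < -(2 * A - B)}
        {ω | -(2 * A - B) ≤ W ω ∧ W ω < -(A - B)} := by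
      rw [Set.disjoint_left]
      rintro ω h ⟨h', _⟩
      exact absurd h' (not_le.mpr h)
    have hm2 : MeasurableSet {ω | -(2 * A - B) ≤ W ω ∧ W ω < -(A - B)} := by
      exact (hWm measurableSet_Ici).inter (hWm measurableSet_Iio)
    have := measure_union (μ := μ) hdisj hm2
    rw [hunion] at this
    rw [this, ENNReal.toReal_add (measure_ne_top μ _) (measure_ne_top μ _)]
    ring
  rw [hIco, hprob, hprob, hprob]
  -- identify the Q-function arguments
  have h2 : (0:ℝ) ≤ 2 := by norm_num
  have e2 : Real.sqrt 2 * Real.sqrt (a₂ / 2) = Real.sqrt a₂ := by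
    rw [← Real.sqrt_mul h2, show (2 * (a₂ / 2) : ℝ) = a₂ by ring]
  have e3 : Real.sqrt 2 * Real.sqrt (a₃ / 2) = Real.sqrt a₃ := by
    rw [← Real.sqrt_mul h2, show (2 * (a₃ / 2) : ℝ) = a₃ by ring]
  have hs3 : Real.sqrt a₃ ≤ Real.sqrt a₂ := Real.sqrt_le_sqrt ha.le
  have hs3' : (0:ℝ) ≤ Real.sqrt a₃ := Real.sqrt_nonneg _
  have hs2' : (0:ℝ) ≤ Real.sqrt a₂ := Real.sqrt_nonneg _
  have hq1 : Real.sqrt (ζ₁ * γ) = Real.sqrt 2 * -(-(A - B)) := by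
    rw [hζ₁, sqrt_sq_mul (by linarith) γ hγ.le, hA, hB, neg_neg]
    rw [mul_sub, ← mul_assoc, ← mul_assoc, e2, e3]
    ring
  have hq4 : Real.sqrt (ζ₄ * γ) = Real.sqrt 2 * -(-(2 * A - B)) := by
    rw [hζ₄, sqrt_sq_mul (by linarith) γ hγ.le, hA, hB, neg_neg]
    rw [mul_sub]
    rw [show Real.sqrt 2 * (2 * (Real.sqrt (a₂/2) * Real.sqrt γ))
        = 2 * (Real.sqrt 2 * Real.sqrt (a₂/2)) * Real.sqrt γ by ring,
      show Real.sqrt 2 * (Real.sqrt (a₃/2) * Real.sqrt γ)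
        = (Real.sqrt 2 * Real.sqrt (a₃/2)) * Real.sqrt γ by ring, e2, e3]
    ring
  have hq5 : Real.sqrt (ζ₅ * γ) = Real.sqrt 2 * -(-(2 * A + B)) := by
    rw [hζ₅, sqrt_sq_mul (by linarith) γ hγ.le, hA, hB, neg_neg]
    rw [mul_add]
    rw [show Real.sqrt 2 * (2 * (Real.sqrt (a₂/2) * Real.sqrt γ))
        = 2 * (Real.sqrt 2 * Real.sqrt (a₂/2)) * Real.sqrt γ by ring,
      show Real.sqrt 2 * (Real.sqrt (a₃/2) * Real.sqrt γ)
        = (Real.sqrt 2 * Real.sqrt (a₃/2)) * Real.sqrt γ by ring, e2, e3]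
    ring
  rw [hq1, hq4, hq5]
  ring
end

section
/- Let a₂ > a₃ > 0, let N_r ≥ 1 be an integer, and let ḡ > 0. Set ζ₁ = (√a₂ − √a₃)², ζ₂ = (√a₂ + √a₃)², ζ₃ = a₃, ζ₄ = (2√a₂ − √a₃)², ζ₅ = (2√a₂ + √a₃)². Then ∫₀^∞ (1/2)·[ 2Q(√(ζ₃ γ)) + Q(√(ζ₁ γ)) − Q(√(ζ₂ γ)) − Q(√(ζ₄ γ)) + Q(√(ζ₅ γ)) ] · γ^{N_r−1} e^{−γ/ḡ} / ((N_r−1)! ḡ^{N_r}) dγ = Σ_{c=1}^{5} ( A_c · (−1)^{c+1} / 2 ) · ((1−μ_c)/2)^{N_r} · Σ_{λ=0}^{N_r−1} C(N_r−1+λ, λ) · ((1+μ_c)/2)^{λ}, where A_c = 2 if c = 3 and A_c = 1 otherwise, and μ_c = √( ζ_c ḡ / (2 + ζ_c ḡ) ). (Average bit error probability of user U₃ in three-user SSK-NOMA with QPSK over Rayleigh fading with MRC, Eqs. (27)–(28).) -/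
open MeasureTheory Real Finset

open MeasureTheory Real Finset Set Filter

lemma integrable_K : Integrable (fun t : ℝ => Real.exp (-t ^ 2 / 2)) := by
  have h := integrable_exp_neg_mul_sq (by norm_num : (0:ℝ) < 1/2)
  convert h using 2 with t
  ring_nf

lemma intKT : ∫ t in Set.Ioi (0:ℝ), Real.exp (-t ^ 2 / 2) = Real.sqrt (2 * Real.pi) / 2 := by
  have h := integral_gaussian_Ioi (1/2)
  have h2 : ∀ t : ℝ, Real.exp (-(1/2) * t ^ 2) = Real.exp (-t^2/2) := by
    intro t; ring_nf
  simp_rw [h2] at h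
  rw [h]
  congr 2
  rw [show π / (1/2) = 2 * π by ring]

lemma split_K (x : ℝ) : ∫ t in Set.Ioi x, Real.exp (-t ^ 2 / 2)
    = (∫ t in Set.Ioi (0:ℝ), Real.exp (-t ^ 2 / 2)) - ∫ t in (0:ℝ)..x, Real.exp (-t ^ 2 / 2) := by
  set K := fun t : ℝ => Real.exp (-t ^ 2 / 2) with hK
  rcases le_or_gt 0 x with hx | hx
  · rw [intervalIntegral.integral_of_le hx]
    have hu : Set.Ioc 0 x ∪ Set.Ioi x = Set.Ioi (0:ℝ) := Set.Ioc_union_Ioi_eq_Ioi hx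
    have hd : Disjoint (Set.Ioc 0 x) (Set.Ioi x) := by
      simp [Set.disjoint_left]
    have := MeasureTheory.setIntegral_union hd measurableSet_Ioi
      (integrable_K.integrableOn) (integrable_K.integrableOn) (f := K)
    rw [hu] at this
    rw [this]; ring
  · rw [intervalIntegral.integral_of_ge hx.le]
    have hu : Set.Ioc x 0 ∪ Set.Ioi 0 = Set.Ioi x := Set.Ioc_union_Ioi_eq_Ioi hx.le
    have hd : Disjoint (Set.Ioc x 0) (Set.Ioi 0) := by
      simp [Set.disjoint_left]
    have := MeasureTheory.setIntegral_union hd measurableSet_Ioi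
      (integrable_K.integrableOn) (integrable_K.integrableOn) (f := K)
    rw [hu] at this
    rw [this]; ring

lemma hasDerivAt_gaussQ (x : ℝ) :
    HasDerivAt gaussQ (-((Real.sqrt (2 * Real.pi))⁻¹ * Real.exp (-x ^ 2 / 2))) x := by
  have hc : Continuous (fun t : ℝ => Real.exp (-t ^ 2 / 2)) := by continuity
  have h1 : HasDerivAt (fun u => ∫ t in (0:ℝ)..u, Real.exp (-t ^ 2 / 2))
      (Real.exp (-x ^ 2 / 2)) x :=
    intervalIntegral.integral_hasDerivAt_right (integrable_K.intervalIntegrable)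
      (hc.stronglyMeasurableAtFilter _ _) hc.continuousAt
  have h2 := (h1.const_sub (∫ t in Set.Ioi (0:ℝ), Real.exp (-t ^ 2 / 2))).const_mul
    ((Real.sqrt (2 * Real.pi))⁻¹)
  have : gaussQ = fun u => (Real.sqrt (2 * Real.pi))⁻¹ *
      ((∫ t in Set.Ioi (0:ℝ), Real.exp (-t ^ 2 / 2)) - ∫ t in (0:ℝ)..u, Real.exp (-t ^ 2 / 2)) := by
    funext u; rw [gaussQ, split_K]
  rw [this]
  refine h2.congr_deriv ?_; ring

lemma continuous_gaussQ : Continuous gaussQ :=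
  continuous_iff_continuousAt.2 fun x => (hasDerivAt_gaussQ x).continuousAt

lemma gaussQ_zero : gaussQ 0 = 1/2 := by
  rw [gaussQ, intKT]
  have h : Real.sqrt (2*π) ≠ 0 := by positivity
  field_simp

lemma gaussQ_nonneg (x : ℝ) : 0 ≤ gaussQ x := by
  apply mul_nonneg (by positivity)
  apply MeasureTheory.setIntegral_nonneg measurableSet_Ioi
  intro t _; positivity

lemma gaussQ_le_half {x : ℝ} (hx : 0 ≤ x) : gaussQ x ≤ 1/2 := by
  rw [← gaussQ_zero, gaussQ, gaussQ]
  apply mul_le_mul_of_nonneg_left _ (by positivity)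
  apply MeasureTheory.setIntegral_mono_set integrable_K.integrableOn
  · filter_upwards with t using by positivity
  · exact HasSubset.Subset.eventuallyLE (Set.Ioi_subset_Ioi hx)

lemma integrableOn_pow_exp_sq {a : ℝ} (ha : 0 < a) (n : ℕ) :
    IntegrableOn (fun t : ℝ => t ^ n * Real.exp (-a * t ^ 2)) (Set.Ioi 0) := by
  have h := integrableOn_rpow_mul_exp_neg_mul_sq ha (s := (n:ℝ)) (by exact_mod_cast neg_one_lt_zero.trans_le (Nat.cast_nonneg n))
  apply h.congr_fun _ measurableSet_Ioi
  intro t ht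
  simp [Real.rpow_natCast]

lemma tendsto_pow_exp_sq {a : ℝ} (ha : 0 < a) (n : ℕ) :
    Tendsto (fun t : ℝ => t ^ n * Real.exp (-a * t ^ 2)) atTop (nhds 0) := by
  have h0 : Tendsto (fun s : ℝ => a⁻¹ ^ n * (s ^ n * Real.exp (-s))) atTop (nhds 0) := by
    have := (tendsto_pow_mul_exp_neg_atTop_nhds_zero n).const_mul (a⁻¹ ^ n)
    simpa using this
  have h1 : Tendsto (fun t : ℝ => a * t) atTop atTop :=
    Filter.tendsto_id.const_mul_atTop ha
  have h2 : Tendsto (fun t : ℝ => a⁻¹ ^ n * ((a*t) ^ n * Real.exp (-(a*t)))) atTop (nhds 0) :=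
    h0.comp h1
  have h3 : Tendsto (fun t : ℝ => t ^ n * Real.exp (-a * t)) atTop (nhds 0) := by
    apply h2.congr'
    filter_upwards [eventually_gt_atTop 0] with t ht
    simp only [mul_pow, neg_mul, ← mul_assoc, ← mul_pow, inv_mul_cancel₀ ha.ne', one_pow, one_mul]
  apply squeeze_zero' (g := fun t : ℝ => t ^ n * Real.exp (-a * t)) _ _ h3
  · filter_upwards [eventually_ge_atTop (0:ℝ)] with t ht
    positivity
  · filter_upwards [eventually_ge_atTop (1:ℝ)] with t ht
    have h4 : t ≤ t ^ 2 := by nlinarith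
    have : -a * t^2 ≤ -a * t := by nlinarith
    exact mul_le_mul_of_nonneg_left (Real.exp_le_exp.2 this) (by positivity)

lemma Gm_eval {a : ℝ} (ha : 0 < a) : ∀ k : ℕ,
    ∫ t in Set.Ioi (0:ℝ), t ^ (2*k) * Real.exp (-a * t ^ 2)
      = Real.sqrt (π/a)/2 * (2*k).factorial / (k.factorial * (4*a) ^ k) := by
  intro k
  induction k with
  | zero => simpa using integral_gaussian_Ioi a
  | succ k ih =>
    -- FTC step
    have hder : ∀ t : ℝ, HasDerivAt (fun t : ℝ => t ^ (2*k+1) * Real.exp (-a * t ^ 2))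
        ((2*k+1) * (t ^ (2*k) * Real.exp (-a * t ^ 2))
          - 2*a*(t ^ (2*k+2) * Real.exp (-a * t ^ 2))) t := by
      intro t
      have h1 := (hasDerivAt_pow (2*k+1) t).mul (((hasDerivAt_pow 2 t).const_mul (-a)).exp)
      refine h1.congr_deriv (Eq.symm ?_)
      push_cast
      ring
    have hint : IntegrableOn (fun t : ℝ => (2*k+1) * (t ^ (2*k) * Real.exp (-a * t ^ 2))
        - 2*a*(t ^ (2*k+2) * Real.exp (-a * t ^ 2))) (Set.Ioi 0) := by
      exact ((integrableOn_pow_exp_sq ha (2*k)).const_mul _).sub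
        ((integrableOn_pow_exp_sq ha (2*k+2)).const_mul _)
    have htend : Tendsto (fun t : ℝ => t ^ (2*k+1) * Real.exp (-a * t ^ 2)) atTop (nhds 0) :=
      tendsto_pow_exp_sq ha (2*k+1)
    have hftc := integral_Ioi_of_hasDerivAt_of_tendsto
      (f := fun t : ℝ => t ^ (2*k+1) * Real.exp (-a * t ^ 2))
      (by fun_prop : Continuous fun t : ℝ => t ^ (2*k+1) * Real.exp (-a * t ^ 2)).continuousWithinAt
      (fun t _ => hder t) hint htend
    rw [MeasureTheory.integral_sub (((integrableOn_pow_exp_sq ha (2*k)).const_mul _))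
        (((integrableOn_pow_exp_sq ha (2*k+2)).const_mul _)),
      MeasureTheory.integral_const_mul, MeasureTheory.integral_const_mul] at hftc
    rw [zero_pow (Nat.succ_ne_zero (2*k)), zero_mul, sub_zero] at hftc
    have hrec : ∫ t in Set.Ioi (0:ℝ), t ^ (2*(k+1)) * Real.exp (-a * t ^ 2)
        = (2*k+1)/(2*a) * ∫ t in Set.Ioi (0:ℝ), t ^ (2*k) * Real.exp (-a * t ^ 2) := by
      have h2 : (2*(k+1)) = 2*k+2 := by ring
      rw [h2]
      have := hftc
      field_simp at this ⊢
      linarith [this]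
    rw [hrec, ih]
    have hk : (k.factorial : ℝ) ≠ 0 := by positivity
    have hk2 : ((2*k).factorial : ℝ) ≠ 0 := by positivity
    have h4a : ((4*a) : ℝ) ≠ 0 := by positivity
    have e1 : (2*(k+1)).factorial = (2*k+2) * ((2*k+1) * (2*k).factorial) := by
      rw [show 2*(k+1) = (2*k+1)+1 by ring, Nat.factorial_succ, show 2*k+1 = (2*k)+1 by ring,
        Nat.factorial_succ]
    have e2 : (k+1).factorial = (k+1) * k.factorial := Nat.factorial_succ k
    rw [e1, e2]
    push_cast
    field_simp
    ring

noncomputable def Ff (μ : ℝ) (n : ℕ) : ℝ :=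
  ((1 - μ)/2) ^ n * ∑ l ∈ Finset.range n, ((n - 1 + l).choose l : ℝ) * ((1 + μ)/2) ^ l

lemma Ff_one (μ : ℝ) : Ff μ 1 = (1 - μ)/2 := by simp [Ff]

lemma choose_double (k : ℕ) : ((2*(k+1)).choose (k+1)) = 2 * ((2*k+1).choose (k+1)) := by
  have h1 : (2*(k+1)) = (2*k+1) + 1 := by ring
  rw [h1, Nat.choose_succ_succ']
  have h2 := Nat.choose_symm (show k+1 ≤ 2*k+1 by omega)
  rw [show 2*k+1 - (k+1) = k by omega] at h2
  omega

lemma Ff_succ (μ : ℝ) (n : ℕ) (hn : 1 ≤ n) :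
    Ff μ (n+1) = Ff μ n - μ/2 * ((2*n).choose n : ℝ) * ((1 - μ^2)/4) ^ n := by
  obtain ⟨k, rfl⟩ : ∃ k, n = k + 1 := ⟨n - 1, by omega⟩
  set y : ℝ := (1 + μ)/2 with hy
  set x : ℝ := (1 - μ)/2 with hx
  have Tdef : ∀ m : ℕ, (True : Prop) := fun _ => trivial
  set T : ℝ := ∑ l ∈ Finset.range (k+2), (((k+1) + l).choose l : ℝ) * y ^ l with hT
  set S : ℝ := ∑ l ∈ Finset.range (k+1), ((k + l).choose l : ℝ) * y ^ l with hS
  set Cm : ℝ := (((2*k+1).choose (k+1) : ℕ) : ℝ) with hCm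
  have hCast : ((2*(k+1)).choose (k+1) : ℝ) = 2 * Cm := by
    rw [hCm, choose_double k]; push_cast; ring
  have e1 : T = (∑ l ∈ Finset.range (k+1), (((k+1) + (l+1)).choose (l+1) : ℝ) * y ^ (l+1)) + 1 := by
    rw [hT, Finset.sum_range_succ']
    simp
  have e2 : T = (∑ l ∈ Finset.range (k+1), (((k+1) + l).choose l : ℝ) * y ^ (l+1))
      + (∑ l ∈ Finset.range (k+1), (((k+1) + l).choose (l+1) : ℝ) * y ^ (l+1)) + 1 := by
    rw [e1, ← Finset.sum_add_distrib]
    congr 1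
    apply Finset.sum_congr rfl
    intro l _
    rw [show (k+1) + (l+1) = ((k+1) + l) + 1 by ring, Nat.choose_succ_succ']
    push_cast; ring
  have e3 : (∑ l ∈ Finset.range (k+1), (((k+1) + l).choose l : ℝ) * y ^ (l+1))
      = y * (T - ((2*(k+1)).choose (k+1) : ℝ) * y ^ (k+1)) := by
    have h1 : T = (∑ l ∈ Finset.range (k+1), (((k+1) + l).choose l : ℝ) * y ^ l)
        + ((2*(k+1)).choose (k+1) : ℝ) * y ^ (k+1) := by
      rw [hT, Finset.sum_range_succ, show (k+1)+(k+1) = 2*(k+1) by ring]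
    rw [h1, add_sub_cancel_right, Finset.mul_sum]
    apply Finset.sum_congr rfl
    intro l _
    ring
  have e4 : (∑ l ∈ Finset.range (k+1), (((k+1) + l).choose (l+1) : ℝ) * y ^ (l+1))
      = (S + Cm * y ^ (k+1)) - 1 := by
    have h1 : (∑ j ∈ Finset.range (k+2), ((k + j).choose j : ℝ) * y ^ j)
        = (∑ l ∈ Finset.range (k+1), ((k + (l+1)).choose (l+1) : ℝ) * y ^ (l+1))
          + ((k + 0).choose 0 : ℝ) * y ^ 0 :=
      Finset.sum_range_succ' _ (k+1)
    have h2 : (∑ j ∈ Finset.range (k+2), ((k + j).choose j : ℝ) * y ^ j)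
        = S + Cm * y ^ (k+1) := by
      rw [Finset.sum_range_succ, ← hS, hCm, show k + (k+1) = 2*k+1 by ring]
    rw [h2.symm.trans h1]
    simp only [Nat.choose_zero_right, Nat.cast_one, pow_zero, mul_one, add_sub_cancel_right]
    apply Finset.sum_congr rfl
    intro l _
    rw [show (k+1) + l = k + (l+1) by ring]
  have hcomb := e2
  rw [e3, e4, hCast] at hcomb
  have key : (1 - y) * T = S + y ^ (k+1) * ((2*Cm) * (1/2 - y)) := by
    linear_combination hcomb
  have hFn1 : Ff μ (k+2) = x ^ (k+2) * T := by
    rw [Ff, hT, ← hy, ← hx]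
    have h : ∀ l, k + 2 - 1 + l = (k+1) + l := fun l => by omega
    simp_rw [h]
  have hFn : Ff μ (k+1) = x ^ (k+1) * S := by
    rw [Ff, hS, ← hy, ← hx]
    have h : ∀ l, k + 1 - 1 + l = k + l := fun l => by omega
    simp_rw [h]
  have hhalf : (1:ℝ)/2 - y = -μ/2 := by rw [hy]; ring
  have hxy : x = 1 - y := by rw [hx, hy]; ring
  have hxy4 : x * y = (1 - μ^2)/4 := by rw [hx, hy]; ring
  calc Ff μ (k+1+1) = x ^ (k+1) * ((1 - y) * T) := by
        rw [show k+1+1 = k+2 by ring, hFn1, hxy]; ring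
    _ = x ^ (k+1) * S + (x*y) ^ (k+1) * ((2*Cm) * (1/2 - y)) := by rw [key, mul_pow]; ring
    _ = Ff μ (k+1) - μ/2 * ((2*(k+1)).choose (k+1) : ℝ) * ((1 - μ^2)/4) ^ (k+1) := by
        rw [← hFn, hhalf, hxy4, hCast]; ring

section core
variable {b g : ℝ}

lemma hasDerivAt_gaussQb (hb : 0 < b) (t : ℝ) :
    HasDerivAt (fun t : ℝ => gaussQ (Real.sqrt b * t))
      (-((Real.sqrt (2 * Real.pi))⁻¹ * Real.sqrt b * Real.exp (-(b/2) * t ^ 2))) t := by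
  have h1 : HasDerivAt (fun t : ℝ => Real.sqrt b * t) (Real.sqrt b) t := by
    simpa using (hasDerivAt_id t).const_mul (Real.sqrt b)
  have h2 := (hasDerivAt_gaussQ (Real.sqrt b * t)).comp t h1
  refine h2.congr_deriv (Eq.symm ?_)
  rw [mul_pow, Real.sq_sqrt hb.le]
  ring_nf

lemma continuous_Qb : Continuous (fun t : ℝ => gaussQ (Real.sqrt b * t)) :=
  continuous_gaussQ.comp (continuous_const.mul continuous_id)

lemma integrableOn_Q_pow_exp (hb : 0 < b) (hg : 0 < g) (k : ℕ) :
    IntegrableOn (fun t : ℝ => gaussQ (Real.sqrt b * t) * (t ^ k * Real.exp (-(1/g) * t ^ 2)))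
      (Set.Ioi 0) := by
  have hg' : (0:ℝ) < 1/g := by positivity
  apply Integrable.mono' ((integrableOn_pow_exp_sq hg' k).const_mul (1/2))
  · exact (continuous_Qb.mul (by continuity)).aestronglyMeasurable
  · filter_upwards [ae_restrict_mem measurableSet_Ioi] with t ht
    have htk : (0:ℝ) ≤ t ^ k * Real.exp (-(1/g) * t ^ 2) :=
      mul_nonneg (pow_nonneg (le_of_lt ht) k) (Real.exp_pos _).le
    rw [norm_mul, Real.norm_of_nonneg (gaussQ_nonneg _), Real.norm_of_nonneg htk]
    exact mul_le_mul_of_nonneg_right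
      (gaussQ_le_half (mul_nonneg (Real.sqrt_nonneg b) (le_of_lt ht))) htk

lemma tendsto_Q_pow_exp (hb : 0 < b) (hg : 0 < g) (k : ℕ) :
    Tendsto (fun t : ℝ => gaussQ (Real.sqrt b * t) * (t ^ k * Real.exp (-(1/g) * t ^ 2)))
      atTop (nhds 0) := by
  have hg' : (0:ℝ) < 1/g := by positivity
  have h1 := (tendsto_pow_exp_sq hg' k).const_mul (1/2 : ℝ)
  rw [mul_zero] at h1
  apply squeeze_zero' _ _ h1
  · filter_upwards [eventually_ge_atTop (0:ℝ)] with t ht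
    exact mul_nonneg (gaussQ_nonneg _) (mul_nonneg (pow_nonneg ht k) (Real.exp_pos _).le)
  · filter_upwards [eventually_ge_atTop (0:ℝ)] with t ht
    exact mul_le_mul_of_nonneg_right (gaussQ_le_half (mul_nonneg (Real.sqrt_nonneg b) ht))
      (mul_nonneg (pow_nonneg ht k) (Real.exp_pos _).le)

variable (b g) in
noncomputable def Qt (k : ℕ) : ℝ :=
  ∫ t in Set.Ioi (0:ℝ), gaussQ (Real.sqrt b * t) * (t ^ k * Real.exp (-(1/g) * t ^ 2))

lemma exp_merge (t : ℝ) :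
    Real.exp (-(b/2) * t ^ 2) * Real.exp (-(1/g) * t ^ 2)
      = Real.exp (-(b/2 + 1/g) * t ^ 2) := by
  rw [← Real.exp_add]; congr 1; ring

lemma ftc_step (hb : 0 < b) (hg : 0 < g) (m : ℕ) :
    (2/g) * Qt b g (2*m+3)
      = (2*(m:ℝ)+2) * Qt b g (2*m+1)
        - ((Real.sqrt (2 * Real.pi))⁻¹ * Real.sqrt b)
          * ∫ t in Set.Ioi (0:ℝ), t ^ (2*m+2) * Real.exp (-(b/2 + 1/g) * t ^ 2) := by
  set c : ℝ := (Real.sqrt (2 * Real.pi))⁻¹ with hc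
  set α : ℝ := b/2 + 1/g with hα
  have hαpos : 0 < α := by rw [hα]; positivity
  set f : ℝ → ℝ := fun t => gaussQ (Real.sqrt b * t) * (t ^ (2*m+2) * Real.exp (-(1/g) * t ^ 2))
    with hf
  set f' : ℝ → ℝ := fun t =>
      (2*(m:ℝ)+2) * (gaussQ (Real.sqrt b * t) * (t ^ (2*m+1) * Real.exp (-(1/g) * t ^ 2)))
      - (2/g) * (gaussQ (Real.sqrt b * t) * (t ^ (2*m+3) * Real.exp (-(1/g) * t ^ 2)))
      - (c * Real.sqrt b) * (t ^ (2*m+2) * Real.exp (-α * t ^ 2)) with hf'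
  have hder : ∀ t : ℝ, HasDerivAt f (f' t) t := by
    intro t
    have h1 := (hasDerivAt_gaussQb hb t).mul
      ((hasDerivAt_pow (2*m+2) t).mul (((hasDerivAt_pow 2 t).const_mul (-(1/g))).exp))
    refine h1.congr_deriv (Eq.symm ?_)
    rw [hf']
    simp only [Pi.mul_apply]
    rw [← exp_merge (b := b) (g := g) t]
    push_cast
    ring
  have hint1 := integrableOn_Q_pow_exp hb hg (2*m+1)
  have hint2 := integrableOn_Q_pow_exp hb hg (2*m+3)
  have hint3 := integrableOn_pow_exp_sq hαpos (2*m+2)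
  have hfint : IntegrableOn f' (Set.Ioi 0) :=
    ((hint1.const_mul _).sub (hint2.const_mul _)).sub (hint3.const_mul _)
  have htend : Tendsto f atTop (nhds 0) := tendsto_Q_pow_exp hb hg (2*m+2)
  have hcont : ContinuousWithinAt f (Set.Ici 0) 0 :=
    ((continuous_Qb.mul (by continuity)) : Continuous f).continuousWithinAt
  have hftc := integral_Ioi_of_hasDerivAt_of_tendsto hcont (fun t _ => hder t) hfint htend
  have hf0 : f 0 = 0 := by
    rw [hf]; simp
  rw [hf0, sub_zero] at hftc
  have hsplit : ∫ t in Set.Ioi (0:ℝ), f' t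
      = (2*(m:ℝ)+2) * Qt b g (2*m+1) - (2/g) * Qt b g (2*m+3)
        - (c * Real.sqrt b) * ∫ t in Set.Ioi (0:ℝ), t ^ (2*m+2) * Real.exp (-α * t ^ 2) := by
    have i12 : IntegrableOn (fun t : ℝ =>
        (2*(m:ℝ)+2) * (gaussQ (Real.sqrt b * t) * (t ^ (2*m+1) * Real.exp (-(1/g) * t ^ 2)))
        - (2/g) * (gaussQ (Real.sqrt b * t) * (t ^ (2*m+3) * Real.exp (-(1/g) * t ^ 2))))
        (Set.Ioi 0) := (hint1.const_mul _).sub (hint2.const_mul _)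
    rw [hf']
    rw [MeasureTheory.integral_sub i12 (hint3.const_mul _),
      MeasureTheory.integral_sub (hint1.const_mul _) (hint2.const_mul _),
      MeasureTheory.integral_const_mul, MeasureTheory.integral_const_mul,
      MeasureTheory.integral_const_mul]
    rfl
  rw [hsplit] at hftc
  linarith

lemma ftc_base (hb : 0 < b) (hg : 0 < g) :
    2 * Qt b g 1 = g/2 - ((Real.sqrt (2*π))⁻¹ * Real.sqrt b) * g *
      ∫ t in Set.Ioi (0:ℝ), t ^ 0 * Real.exp (-(b/2 + 1/g) * t ^ 2) := by
  set c : ℝ := (Real.sqrt (2 * Real.pi))⁻¹ with hc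
  set α : ℝ := b/2 + 1/g with hα
  have hαpos : 0 < α := by rw [hα]; positivity
  set f : ℝ → ℝ := fun t => (-g) * (gaussQ (Real.sqrt b * t) * Real.exp (-(1/g) * t ^ 2))
    with hf
  set f' : ℝ → ℝ := fun t => (c * Real.sqrt b * g) * (t ^ 0 * Real.exp (-α * t ^ 2))
      + 2 * (gaussQ (Real.sqrt b * t) * (t ^ 1 * Real.exp (-(1/g) * t ^ 2))) with hf'
  have hder : ∀ t : ℝ, HasDerivAt f (f' t) t := by
    intro t
    have h1 := ((hasDerivAt_gaussQb hb t).mul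
      (((hasDerivAt_pow 2 t).const_mul (-(1/g))).exp)).const_mul (-g)
    refine h1.congr_deriv (Eq.symm ?_)
    rw [hf']
    simp only
    rw [← exp_merge (b := b) (g := g) t]
    push_cast
    linear_combination (-(2*t*(gaussQ (Real.sqrt b * t) * Real.exp (-(1/g)*t^2)))) *
      (mul_inv_cancel₀ hg.ne')
  have hint0 := integrableOn_pow_exp_sq hαpos 0
  have hint1 := integrableOn_Q_pow_exp hb hg 1
  have hfint : IntegrableOn f' (Set.Ioi 0) := (hint0.const_mul _).add (hint1.const_mul _)
  have htend : Tendsto f atTop (nhds 0) := by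
    have h := (tendsto_Q_pow_exp hb hg 0).const_mul (-g)
    rw [mul_zero] at h
    apply h.congr
    intro t
    rw [hf]
    simp
  have hcont : ContinuousWithinAt f (Set.Ici 0) 0 :=
    ((continuous_const.mul (continuous_Qb.mul (by continuity))) : Continuous f).continuousWithinAt
  have hftc := integral_Ioi_of_hasDerivAt_of_tendsto hcont (fun t _ => hder t) hfint htend
  have hf0 : f 0 = -g * (1/2) := by
    rw [hf]; simp [gaussQ_zero]
  rw [hf0] at hftc
  have hsplit : ∫ t in Set.Ioi (0:ℝ), f' t
      = (c * Real.sqrt b * g) * (∫ t in Set.Ioi (0:ℝ), t ^ 0 * Real.exp (-α * t ^ 2))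
        + 2 * Qt b g 1 := by
    rw [hf']
    rw [MeasureTheory.integral_add (hint0.const_mul _) (hint1.const_mul _),
      MeasureTheory.integral_const_mul, MeasureTheory.integral_const_mul]
    rfl
  rw [hsplit] at hftc
  linear_combination hftc

lemma cov (hb : 0 < b) (hg : 0 < g) (m : ℕ) :
    ∫ γ in Set.Ioi (0:ℝ), gaussQ (Real.sqrt (b*γ)) * γ^m * Real.exp (-γ/g)
      = 2 * Qt b g (2*m+1) := by
  have h := MeasureTheory.integral_comp_rpow_Ioi
    (fun γ => gaussQ (Real.sqrt (b*γ)) * γ^m * Real.exp (-γ/g)) (p := 2) two_ne_zero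
  rw [← h, Qt, ← MeasureTheory.integral_const_mul]
  apply MeasureTheory.setIntegral_congr_fun measurableSet_Ioi
  intro x hx
  have hx0 : (0:ℝ) < x := hx
  simp only [smul_eq_mul]
  rw [show ((2:ℝ)) - 1 = 1 by norm_num, Real.rpow_one,
    show (x:ℝ) ^ (2:ℝ) = x^2 by rw [show (2:ℝ) = ((2:ℕ):ℝ) by norm_num, Real.rpow_natCast],
    Real.sqrt_mul hb.le, Real.sqrt_sq hx0.le,
    show (-(x^2)/g : ℝ) = -(1/g) * x^2 by ring,
    show |(2:ℝ)| = 2 by norm_num]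
  ring

lemma keyJ (hb : 0 < b) (hg : 0 < g) : ∀ m : ℕ,
    ∫ γ in Set.Ioi (0:ℝ), gaussQ (Real.sqrt (b*γ)) * γ^m * Real.exp (-γ/g)
      = Ff (Real.sqrt (b*g/(2+b*g))) (m+1) * (m.factorial * g^(m+1)) := by
  set c : ℝ := (Real.sqrt (2 * Real.pi))⁻¹ with hc
  set α : ℝ := b/2 + 1/g with hα
  have hαpos : 0 < α := by rw [hα]; positivity
  set μ : ℝ := Real.sqrt (b*g/(2+b*g)) with hμ
  have h2bg : (0:ℝ) < 2 + b*g := by positivity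
  have hμsq : μ^2 = b*g/(2+b*g) := Real.sq_sqrt (by positivity)
  have hμeq : c * Real.sqrt b * Real.sqrt (π/α) = μ := by
    have hαne : α ≠ 0 := hαpos.ne'
    have h1 : μ = Real.sqrt ((2*π)⁻¹ * (b * (π/α))) := by
      rw [hμ]
      congr 1
      rw [hα]
      have hne : b/2 + 1/g ≠ 0 := by positivity
      field_simp
      ring
    rw [h1, Real.sqrt_mul (by positivity), Real.sqrt_mul hb.le, Real.sqrt_inv, ← mul_assoc]
  have h1μ4 : (1 - μ^2)/4 = ((4*α)*g)⁻¹ := by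
    rw [hμsq, hα]
    field_simp
    ring
  intro m
  induction m with
  | zero =>
    rw [cov hb hg 0, ftc_base hb hg]
    have hg0 : (∫ t in Set.Ioi (0:ℝ), t ^ 0 * Real.exp (-(b/2+1/g) * t ^ 2))
        = Real.sqrt (π/α)/2 := by
      rw [← hα]
      have h := Gm_eval hαpos 0
      norm_num [Nat.factorial] at h ⊢
      exact h
    rw [hg0, Ff_one]
    simp only [Nat.factorial_zero, Nat.cast_one, pow_one, one_mul]
    linear_combination (-(g/2)) * hμeq
  | succ m ih =>
    have hcov := cov hb hg (m+1)
    rw [show 2*(m+1)+1 = 2*m+3 by ring] at hcov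
    have hcovm := cov hb hg m
    have hG := Gm_eval hαpos (m+1)
    rw [show 2*(m+1) = 2*m+2 by ring] at hG
    have hC : ((2*(m+1)).choose (m+1) : ℝ)
        = ((2*(m+1)).factorial : ℝ) / ((m+1).factorial * (m+1).factorial) := by
      rw [Nat.cast_choose ℝ (by omega : m+1 ≤ 2*(m+1)), show 2*(m+1) - (m+1) = m+1 by omega]
    have hpw : ((1 - μ^2)/4)^(m+1) = ((4*α)^(m+1))⁻¹ * (g^(m+1))⁻¹ := by
      rw [h1μ4, mul_inv, mul_pow, inv_pow, inv_pow]
    have hfac : ((m+1).factorial : ℝ) = ((m:ℝ)+1) * (m.factorial : ℝ) := by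
      rw [Nat.factorial_succ]; push_cast; ring
    have hfac2 : ((2*(m+1)).factorial : ℝ) = ((2*m+2).factorial : ℝ) := by
      rw [show 2*(m+1) = 2*m+2 by ring]
    have hαne : ((4*α) : ℝ) ≠ 0 := by positivity
    have hgne : g ≠ 0 := hg.ne'
    have hfne : ((m+1).factorial : ℝ) ≠ 0 := by positivity
    have hfne2 : ((m.factorial) : ℝ) ≠ 0 := by positivity
    have hpne : ((4*α) : ℝ)^(m+1) ≠ 0 := pow_ne_zero _ hαne
    have hgpne : (g : ℝ)^(m+1) ≠ 0 := pow_ne_zero _ hgne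
    have TT : μ/2 * (((2*(m+1)).choose (m+1) : ℕ):ℝ) * ((1-μ^2)/4)^(m+1)
          * (((m+1).factorial:ℝ) * g^(m+1+1))
        = g * ((c * Real.sqrt b) * (Real.sqrt (π/α)/2 * ((2*m+2).factorial:ℝ)
          / (((m+1).factorial:ℝ) * (4*α)^(m+1)))) := by
      rw [hC, hpw, ← hμeq, hfac2]
      field_simp
      ring
    have hstep' : 2 * Qt b g (2*m+3)
        = g * ((2*(m:ℝ)+2) * Qt b g (2*m+1))
          - g * ((c * Real.sqrt b) * (Real.sqrt (π/α)/2 * ((2*m+2).factorial:ℝ)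
            / (((m+1).factorial:ℝ) * (4*α)^(m+1)))) := by
      have h := ftc_step hb hg m
      rw [← hα, hG] at h
      have h2 : (2:ℝ) * Qt b g (2*m+3) = g * ((2/g) * Qt b g (2*m+3)) := by
        field_simp
      rw [h2, h]
      ring
    rw [hcov, Ff_succ μ (m+1) (by omega)]
    rw [hcovm] at ih
    linear_combination hstep' + ((m:ℝ)+1)*g*ih + TT - (Ff μ (m+1) * g^(m+1+1))*hfac

end core

section assemble
variable {b g : ℝ}

lemma integrableOn_Q_gamma (hb : 0 < b) (hg : 0 < g) (m : ℕ) :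
    IntegrableOn (fun γ : ℝ => gaussQ (Real.sqrt (b*γ)) * γ^m * Real.exp (-γ/g))
      (Set.Ioi 0) := by
  have hbase : IntegrableOn (fun γ : ℝ => γ^m * Real.exp (-γ/g)) (Set.Ioi 0) := by
    have h := integrableOn_rpow_mul_exp_neg_mul_rpow (p := 1) (s := (m:ℝ)) (b := 1/g)
        (by exact_mod_cast neg_one_lt_zero.trans_le (Nat.cast_nonneg m)) zero_lt_one (by positivity)
    apply h.congr_fun _ measurableSet_Ioi
    intro x hx
    simp only [Real.rpow_natCast, Real.rpow_one]
    rw [show (-(1/g)*x : ℝ) = -x/g by ring]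
  apply Integrable.mono' (hbase.const_mul (1/2))
  · exact (((continuous_gaussQ.comp (Real.continuous_sqrt.comp
      (continuous_const.mul continuous_id))).mul (continuous_pow m)).mul
      (by continuity)).aestronglyMeasurable
  · filter_upwards [ae_restrict_mem measurableSet_Ioi] with γ hγ
    have hk : (0:ℝ) ≤ γ ^ m * Real.exp (-γ/g) :=
      mul_nonneg (pow_nonneg (le_of_lt hγ) m) (Real.exp_pos _).le
    have hnn : (0:ℝ) ≤ gaussQ (Real.sqrt (b*γ)) * γ ^ m := by
      exact mul_nonneg (gaussQ_nonneg _) (pow_nonneg (le_of_lt hγ) m)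
    rw [norm_mul, norm_mul, Real.norm_of_nonneg (gaussQ_nonneg _),
      Real.norm_of_nonneg (pow_nonneg (le_of_lt hγ) m),
      Real.norm_of_nonneg (Real.exp_pos _).le]
    calc gaussQ (Real.sqrt (b*γ)) * γ ^ m * Real.exp (-γ/g)
        ≤ 1/2 * γ ^ m * Real.exp (-γ/g) := by
          apply mul_le_mul_of_nonneg_right _ (Real.exp_pos _).le
          exact mul_le_mul_of_nonneg_right (gaussQ_le_half (Real.sqrt_nonneg _))
            (pow_nonneg (le_of_lt hγ) m)
      _ = 1/2 * (γ ^ m * Real.exp (-γ/g)) := by ring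

end assemble


/-- Average bit error probability of user U₃ in three-user SSK-NOMA with QPSK over Rayleigh
fading with MRC (Eqs. (27)–(28)): averaging the conditional BEP
`(1/2)[2Q(√(ζ₃γ)) + Q(√(ζ₁γ)) − Q(√(ζ₂γ)) − Q(√(ζ₄γ)) + Q(√(ζ₅γ))]`
against the Gamma(N_r, ḡ) density gives
`∑_{c=1}^{5} (A_c (−1)^{c+1} / 2) ((1−μ_c)/2)^{N_r} ∑_{λ=0}^{N_r−1} C(N_r−1+λ, λ) ((1+μ_c)/2)^λ`,
where `A_c = 2` if `c = 3` and `A_c = 1` otherwise. Here the index `c ∈ {1,…,5}` is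
modelled by `Finset.Icc 1 5`. -/
theorem stmt4 (a₂ a₃ : ℝ) (ha : a₂ > a₃) (ha₃ : a₃ > 0)
    (Nr : ℕ) (hNr : 1 ≤ Nr) (gbar : ℝ) (hg : 0 < gbar)
    (ζ : ℕ → ℝ)
    (hζ₁ : ζ 1 = (Real.sqrt a₂ - Real.sqrt a₃) ^ 2)
    (hζ₂ : ζ 2 = (Real.sqrt a₂ + Real.sqrt a₃) ^ 2)
    (hζ₃ : ζ 3 = a₃)
    (hζ₄ : ζ 4 = (2 * Real.sqrt a₂ - Real.sqrt a₃) ^ 2)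
    (hζ₅ : ζ 5 = (2 * Real.sqrt a₂ + Real.sqrt a₃) ^ 2)
    (μ : ℕ → ℝ) (hμ : ∀ c, μ c = Real.sqrt (ζ c * gbar / (2 + ζ c * gbar)))
    (A : ℕ → ℝ) (hA : ∀ c, A c = if c = 3 then 2 else 1) :
    ∫ γ in Set.Ioi (0 : ℝ),
        (1 / 2 * (2 * gaussQ (Real.sqrt (ζ 3 * γ)) + gaussQ (Real.sqrt (ζ 1 * γ))
            - gaussQ (Real.sqrt (ζ 2 * γ)) - gaussQ (Real.sqrt (ζ 4 * γ))
            + gaussQ (Real.sqrt (ζ 5 * γ)))) *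
          γ ^ (Nr - 1) * Real.exp (-γ / gbar) / ((Nat.factorial (Nr - 1) : ℝ) * gbar ^ Nr)
      = ∑ c ∈ Finset.Icc 1 5, A c * (-1 : ℝ) ^ (c + 1) / 2 * ((1 - μ c) / 2) ^ Nr *
          ∑ l ∈ Finset.range Nr, (Nat.choose (Nr - 1 + l) l : ℝ) * ((1 + μ c) / 2) ^ l := by
  obtain ⟨m, rfl⟩ : ∃ m, Nr = m + 1 := ⟨Nr - 1, (Nat.succ_pred_eq_of_pos hNr).symm⟩
  simp only [Nat.add_sub_cancel]
  -- positivity of the ζ's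
  have hs3 : 0 < Real.sqrt a₃ := Real.sqrt_pos.mpr ha₃
  have hss : Real.sqrt a₃ < Real.sqrt a₂ := Real.sqrt_lt_sqrt ha₃.le ha
  have hz1 : 0 < ζ 1 := by rw [hζ₁]; exact pow_pos (by linarith) 2
  have hz2 : 0 < ζ 2 := by rw [hζ₂]; exact pow_pos (by linarith) 2
  have hz3 : 0 < ζ 3 := by rw [hζ₃]; exact ha₃
  have hz4 : 0 < ζ 4 := by rw [hζ₄]; exact pow_pos (by linarith) 2
  have hz5 : 0 < ζ 5 := by rw [hζ₅]; exact pow_pos (by linarith) 2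
  -- the five integral evaluations
  have I1 := keyJ hz1 hg m
  have I2 := keyJ hz2 hg m
  have I3 := keyJ hz3 hg m
  have I4 := keyJ hz4 hg m
  have I5 := keyJ hz5 hg m
  rw [← hμ 1] at I1; rw [← hμ 2] at I2; rw [← hμ 3] at I3
  rw [← hμ 4] at I4; rw [← hμ 5] at I5
  -- integrabilities
  have i1 := (integrableOn_Q_gamma hz1 hg m).const_mul (1/2 : ℝ)
  have i2 := (integrableOn_Q_gamma hz2 hg m).const_mul (1/2 : ℝ)
  have i3 := integrableOn_Q_gamma hz3 hg m
  have i4 := (integrableOn_Q_gamma hz4 hg m).const_mul (1/2 : ℝ)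
  have i5 := (integrableOn_Q_gamma hz5 hg m).const_mul (1/2 : ℝ)
  have h0 : ∫ γ in Set.Ioi (0 : ℝ),
        (1 / 2 * (2 * gaussQ (Real.sqrt (ζ 3 * γ)) + gaussQ (Real.sqrt (ζ 1 * γ))
            - gaussQ (Real.sqrt (ζ 2 * γ)) - gaussQ (Real.sqrt (ζ 4 * γ))
            + gaussQ (Real.sqrt (ζ 5 * γ)))) *
          γ ^ m * Real.exp (-γ / gbar) / ((Nat.factorial m : ℝ) * gbar ^ (m+1))
      = ((Nat.factorial m : ℝ) * gbar ^ (m+1))⁻¹ * ∫ γ in Set.Ioi (0 : ℝ),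
          (gaussQ (Real.sqrt (ζ 3 * γ)) * γ ^ m * Real.exp (-γ/gbar)
          + 1/2 * (gaussQ (Real.sqrt (ζ 1 * γ)) * γ ^ m * Real.exp (-γ/gbar))
          - 1/2 * (gaussQ (Real.sqrt (ζ 2 * γ)) * γ ^ m * Real.exp (-γ/gbar))
          - 1/2 * (gaussQ (Real.sqrt (ζ 4 * γ)) * γ ^ m * Real.exp (-γ/gbar))
          + 1/2 * (gaussQ (Real.sqrt (ζ 5 * γ)) * γ ^ m * Real.exp (-γ/gbar))) := by
    rw [← MeasureTheory.integral_const_mul]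
    exact MeasureTheory.setIntegral_congr_fun measurableSet_Ioi (fun γ _ => by ring)
  rw [h0]
  have iA : IntegrableOn (fun γ : ℝ =>
      gaussQ (Real.sqrt (ζ 3 * γ)) * γ ^ m * Real.exp (-γ/gbar)
      + 1/2 * (gaussQ (Real.sqrt (ζ 1 * γ)) * γ ^ m * Real.exp (-γ/gbar))
      - 1/2 * (gaussQ (Real.sqrt (ζ 2 * γ)) * γ ^ m * Real.exp (-γ/gbar))
      - 1/2 * (gaussQ (Real.sqrt (ζ 4 * γ)) * γ ^ m * Real.exp (-γ/gbar)))
      (Set.Ioi 0) := ((i3.add i1).sub i2).sub i4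
  have iB : IntegrableOn (fun γ : ℝ =>
      gaussQ (Real.sqrt (ζ 3 * γ)) * γ ^ m * Real.exp (-γ/gbar)
      + 1/2 * (gaussQ (Real.sqrt (ζ 1 * γ)) * γ ^ m * Real.exp (-γ/gbar))
      - 1/2 * (gaussQ (Real.sqrt (ζ 2 * γ)) * γ ^ m * Real.exp (-γ/gbar)))
      (Set.Ioi 0) := (i3.add i1).sub i2
  have iC : IntegrableOn (fun γ : ℝ =>
      gaussQ (Real.sqrt (ζ 3 * γ)) * γ ^ m * Real.exp (-γ/gbar)
      + 1/2 * (gaussQ (Real.sqrt (ζ 1 * γ)) * γ ^ m * Real.exp (-γ/gbar)))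
      (Set.Ioi 0) := i3.add i1
  rw [MeasureTheory.integral_add iA i5, MeasureTheory.integral_sub iB i4,
    MeasureTheory.integral_sub iC i2, MeasureTheory.integral_add i3 i1,
    MeasureTheory.integral_const_mul, MeasureTheory.integral_const_mul,
    MeasureTheory.integral_const_mul, MeasureTheory.integral_const_mul,
    I1, I2, I3, I4, I5]
  -- expand the RHS sum
  have hIcc : Finset.Icc (1:ℕ) 5 = {1, 2, 3, 4, 5} := by decide
  rw [hIcc]
  rw [Finset.sum_insert (by decide), Finset.sum_insert (by decide),
    Finset.sum_insert (by decide), Finset.sum_insert (by decide), Finset.sum_singleton]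
  have hR : ∀ cc : ℕ, ∀ C : ℝ, C * ((1 - μ cc)/2) ^ (m+1) *
      (∑ l ∈ Finset.range (m+1), (((m + l).choose l : ℕ) : ℝ) * ((1 + μ cc)/2) ^ l)
      = C * Ff (μ cc) (m+1) := by
    intro cc C
    rw [Ff]
    simp only [Nat.add_sub_cancel]
    ring
  rw [hR 1, hR 2, hR 3, hR 4, hR 5]
  rw [hA 1, hA 2, hA 3, hA 4, hA 5]
  norm_num
  have hD : ((Nat.factorial m : ℝ) * gbar ^ (m+1)) ≠ 0 := by positivity
  field_simp
  ring
end

section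
/- Let N ≥ 1 be an integer and η > 0. Then ∫₀^∞ log₂(1 + η γ) · γ^{N−1} e^{−γ} / (N−1)! dγ = (log₂ e / (N−1)!) · Σ_{λ=0}^{N−1} ((N−1)!/(N−1−λ)!) · [ (−1)^{N−λ−2} · η^{−(N−1−λ)} · e^{1/η} · Ei(−1/η) + Σ_{ς=1}^{N−1−λ} (ς−1)! · (−η)^{−(N−1−λ−ς)} ], where Ei(−x) = −∫_x^∞ e^{−t}/t dt for x > 0. (The closed-form evaluation of the ergodic-rate integral over a Gamma-distributed SNR, the core of Eq. (40).) -/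
open MeasureTheory Real Finset

/-- `negEi x` is the exponential integral `Ei(−x) = −∫_x^∞ e^{−t}/t dt` (for `x > 0`). -/
noncomputable def negEi (x : ℝ) : ℝ := -∫ t in Set.Ioi x, Real.exp (-t) / t



noncomputable def KK (m : ℕ) (b : ℝ) : ℝ := ∫ γ in Set.Ioi (0:ℝ), γ ^ m * Real.exp (-γ) / (γ + b)

lemma shiftInt (b : ℝ) (g : ℝ → ℝ) :
    ∫ x in Set.Ioi (0:ℝ), g (x + b) = ∫ x in Set.Ioi b, g x := by
  rw [← integral_indicator measurableSet_Ioi, ← integral_indicator measurableSet_Ioi]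
  rw [← integral_add_right_eq_self (fun x => (Set.Ioi b).indicator g x) b]
  congr 1
  ext x
  by_cases hx : x ∈ Set.Ioi (0:ℝ)
  · rw [Set.indicator_of_mem hx, Set.indicator_of_mem (by simpa using hx.out)]
  · rw [Set.indicator_of_notMem hx, Set.indicator_of_notMem (by simp at hx ⊢; linarith)]

lemma KK_zero {b : ℝ} (hb : 0 < b) : KK 0 b = -(Real.exp b * negEi b) := by
  have h1 : KK 0 b = ∫ γ in Set.Ioi (0:ℝ), Real.exp b * ((fun t => Real.exp (-t) / t) (γ + b)) := by
    refine setIntegral_congr_fun measurableSet_Ioi (fun x hx => ?_)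
    simp only [Set.mem_Ioi] at hx
    simp only [pow_zero, one_mul]
    rw [mul_div_assoc', ← Real.exp_add, show b + -(x+b) = -x by ring]
  rw [h1, integral_const_mul, shiftInt b (fun t => Real.exp (-t) / t), negEi]
  ring

lemma powExpInt (m : ℕ) : IntegrableOn (fun γ : ℝ => γ ^ m * Real.exp (-γ)) (Set.Ioi 0) := by
  have h := Real.GammaIntegral_convergent (s := (m + 1 : ℝ)) (by positivity)
  refine h.congr_fun (fun x hx => ?_) measurableSet_Ioi
  rw [add_sub_cancel_right]
  beta_reduce
  rw [Real.rpow_natCast, mul_comm]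

lemma powExpInt' (m : ℕ) : ∫ γ in Set.Ioi (0:ℝ), γ ^ m * Real.exp (-γ) = m.factorial := by
  have h := Real.Gamma_nat_eq_factorial m
  rw [Real.Gamma_eq_integral (by positivity : (0:ℝ) < m + 1)] at h
  rw [← h]
  refine setIntegral_congr_fun measurableSet_Ioi (fun x hx => ?_)
  rw [add_sub_cancel_right, Real.rpow_natCast, mul_comm]

lemma fracInt (m : ℕ) {b : ℝ} (hb : 0 < b) :
    IntegrableOn (fun γ : ℝ => γ ^ m * Real.exp (-γ) / (γ + b)) (Set.Ioi 0) := by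
  refine Integrable.mono ((powExpInt m).const_mul b⁻¹) ?_ ?_
  · apply Measurable.aestronglyMeasurable
    exact ((measurable_id.pow_const m).mul (measurable_id.neg.exp)).div (measurable_id.add_const b)
  · filter_upwards [ae_restrict_mem measurableSet_Ioi] with x hx
    simp only [Set.mem_Ioi] at hx
    rw [Real.norm_eq_abs, Real.norm_eq_abs, abs_div, abs_mul]
    rw [abs_of_pos (by positivity), abs_of_pos (Real.exp_pos _), abs_of_pos (by linarith),
      abs_of_pos (by positivity), div_le_iff₀ (by linarith)]
    rw [mul_comm b⁻¹, mul_assoc]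
    have : (1:ℝ) ≤ b⁻¹ * (x + b) := by
      rw [le_inv_mul_iff₀ hb, mul_one]; linarith
    nlinarith [mul_pos (pow_pos hx m) (Real.exp_pos (-x))]

lemma KK_succ (m : ℕ) {b : ℝ} (hb : 0 < b) : KK (m+1) b = m.factorial - b * KK m b := by
  have heq : ∀ x ∈ Set.Ioi (0:ℝ), x ^ (m+1) * Real.exp (-x) / (x + b)
      = x ^ m * Real.exp (-x) - b * (x ^ m * Real.exp (-x) / (x + b)) := by
    intro x hx
    simp only [Set.mem_Ioi] at hx
    have hxb : x + b ≠ 0 := by linarith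
    field_simp
    ring
  rw [KK, setIntegral_congr_fun measurableSet_Ioi heq,
    integral_sub (powExpInt m) ((fracInt m hb).const_mul b),
    integral_const_mul, powExpInt', KK]

lemma KK_closed (m : ℕ) {b : ℝ} (hb : 0 < b) :
    KK m b = (-1:ℝ) ^ ((m:ℤ) - 1) * b ^ m * Real.exp b * negEi b
      + ∑ s ∈ Finset.Icc 1 m, (Nat.factorial (s-1) : ℝ) * (-b) ^ (m - s) := by
  induction m with
  | zero =>
    rw [KK_zero hb]
    norm_num
  | succ m ih =>
    rw [KK_succ m hb, ih, Finset.sum_Icc_succ_top (by omega : 1 ≤ m+1)]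
    have hsum : ∑ s ∈ Finset.Icc 1 m, (Nat.factorial (s-1) : ℝ) * (-b) ^ (m + 1 - s)
        = ∑ s ∈ Finset.Icc 1 m, -(b * ((Nat.factorial (s-1) : ℝ) * (-b) ^ (m - s))) := by
      refine Finset.sum_congr rfl (fun s hs => ?_)
      simp only [Finset.mem_Icc] at hs
      rw [show m + 1 - s = (m - s) + 1 by omega, pow_succ]
      ring
    rw [hsum, Finset.sum_neg_distrib, ← Finset.mul_sum]
    have h1 : ((-1:ℝ)) ^ (((m+1:ℕ):ℤ) - 1) = (-1:ℝ) ^ m := by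
      push_cast
      rw [add_sub_cancel_right, zpow_natCast]
    have h2 : ((-1:ℝ)) ^ ((m:ℤ) - 1) = -((-1:ℝ) ^ m) := by
      rw [zpow_sub₀ (by norm_num), zpow_natCast, zpow_one]
      field_simp
    rw [h1, h2]
    simp only [Nat.add_sub_cancel, pow_zero, mul_one, Nat.sub_self]
    push_cast
    ring

lemma PsubP (n : ℕ) (x : ℝ) :
    ∑ l ∈ Finset.range (n+1), ((n.factorial : ℝ)/l.factorial) * x^l
      - ∑ l ∈ Finset.range (n+1), ((n.factorial : ℝ)/l.factorial) * ((l:ℝ) * x^(l-1))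
      = x^n := by
  rw [Finset.sum_range_succ, Finset.sum_range_succ' _ n]
  have hterm : ∀ i, ((n.factorial:ℝ)/(i+1).factorial) * (((i+1:ℕ):ℝ) * x^((i+1)-1))
      = ((n.factorial:ℝ)/i.factorial) * x^i := by
    intro i
    rw [Nat.factorial_succ, Nat.add_sub_cancel]
    have : ((i+1).factorial : ℝ) ≠ 0 := Nat.cast_ne_zero.2 (i+1).factorial_ne_zero
    push_cast
    field_simp
  rw [Finset.sum_congr rfl (fun i _ => hterm i)]
  have hn : ((n.factorial:ℝ)/n.factorial) = 1 := div_self (Nat.cast_ne_zero.2 n.factorial_ne_zero)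
  rw [hn]
  simp


lemma IBP (n : ℕ) {η : ℝ} (hη : 0 < η) :
    ∫ γ in Set.Ioi (0:ℝ), Real.log (1 + η * γ) * (γ ^ n * Real.exp (-γ))
      = ∑ l ∈ Finset.range (n+1), ((n.factorial : ℝ)/(l.factorial)) * KK l (1/η) := by
  have hb : (0:ℝ) < 1/η := by positivity
  set b : ℝ := 1/η with hbdef
  set c : ℕ → ℝ := fun l => (n.factorial : ℝ)/(l.factorial) with hc
  set P : ℝ → ℝ := fun x => ∑ l ∈ Finset.range (n+1), c l * x^l with hP
  set F : ℝ → ℝ := fun x => Real.log (1 + η*x) * (-(Real.exp (-x) * P x)) with hF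
  set F' : ℝ → ℝ := fun x => Real.log (1 + η*x) * (x^n * Real.exp (-x))
      - ∑ l ∈ Finset.range (n+1), c l * (x^l * Real.exp (-x) / (x + b)) with hF'
  -- derivative
  have hderiv : ∀ x ∈ Set.Ici (0:ℝ), HasDerivAt F (F' x) x := by
    intro x hx
    have hx0 : (0:ℝ) ≤ x := hx
    have h1 : (0:ℝ) < 1 + η*x := by nlinarith
    have hxb : x + b ≠ 0 := by positivity
    have hlog : HasDerivAt (fun y => Real.log (1 + η*y)) (η/(1+η*x)) x := by
      have hin : HasDerivAt (fun y : ℝ => 1 + η*y) η x := by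
        simpa using ((hasDerivAt_id x).const_mul η).const_add 1
      have := (Real.hasDerivAt_log h1.ne').comp x hin
      simpa [div_eq_inv_mul, Function.comp_def] using this
    have hPd : HasDerivAt P (∑ l ∈ Finset.range (n+1), c l * ((l:ℝ) * x^(l-1))) x := by
      apply HasDerivAt.fun_sum
      intro l _
      exact (hasDerivAt_pow l x).const_mul (c l)
    have hexp : HasDerivAt (fun y : ℝ => Real.exp (-y)) (-Real.exp (-x)) x := by
      simpa [Function.comp_def] using (Real.hasDerivAt_exp (-x)).comp x (hasDerivAt_neg x)
    have hG : HasDerivAt (fun y => -(Real.exp (-y) * P y))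
        (Real.exp (-x) * P x - Real.exp (-x) * (∑ l ∈ Finset.range (n+1), c l * ((l:ℝ) * x^(l-1)))) x := by
      have := (hexp.fun_mul hPd).fun_neg
      refine this.congr_deriv ?_
      ring
    have := hlog.fun_mul hG
    refine this.congr_deriv ?_
    simp only [hF']
    have hPs := PsubP n x
    have hkey : η/(1+η*x) = 1/(x+b) := by
      rw [hbdef, div_eq_div_iff h1.ne' (by positivity : (0:ℝ) < x + 1/η).ne']
      field_simp
      ring
    have hsplit : Real.exp (-x) * P x - Real.exp (-x) * (∑ l ∈ Finset.range (n+1), c l * ((l:ℝ) * x^(l-1)))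
        = Real.exp (-x) * x^n := by
      rw [← mul_sub, hPs]
    rw [hsplit, hkey]
    have hsum : ∑ l ∈ Finset.range (n+1), c l * (x^l * Real.exp (-x) / (x + b))
        = 1/(x+b) * (Real.exp (-x) * P x) := by
      simp only [hP, Finset.mul_sum]
      refine Finset.sum_congr rfl (fun l _ => ?_)
      field_simp
    rw [hsum]
    ring
  -- tendsto 0
  have htend : Filter.Tendsto F Filter.atTop (nhds 0) := by
    have hbd : ∀ᶠ x in Filter.atTop, ‖F x‖ ≤ ((1+η) * ∑ l ∈ Finset.range (n+1), c l) * (x^(n+1) * Real.exp (-x)) := by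
      filter_upwards [Filter.eventually_ge_atTop (1:ℝ)] with x hx1
      have hx0 : (0:ℝ) ≤ x := by linarith
      have h1 : (1:ℝ) ≤ 1 + η*x := by nlinarith
      have hlognn : 0 ≤ Real.log (1 + η*x) := Real.log_nonneg h1
      have hPnn : 0 ≤ P x := Finset.sum_nonneg (fun l _ => by positivity)
      have hFnorm : ‖F x‖ = Real.log (1 + η*x) * (Real.exp (-x) * P x) := by
        rw [hF]
        rw [norm_eq_abs, abs_mul, abs_neg, abs_of_nonneg hlognn,
          abs_of_nonneg (by positivity)]
      rw [hFnorm]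
      have hlogle : Real.log (1 + η*x) ≤ (1+η) * x := by
        have := Real.log_le_sub_one_of_pos (by linarith : (0:ℝ) < 1 + η*x)
        nlinarith
      have hPle : P x ≤ (∑ l ∈ Finset.range (n+1), c l) * x^n := by
        rw [hP, Finset.sum_mul]
        refine Finset.sum_le_sum (fun l hl => ?_)
        have : x^l ≤ x^n := pow_le_pow_right₀ hx1 (by simp at hl; omega)
        have hcnn : 0 ≤ c l := by positivity
        nlinarith
      calc Real.log (1 + η*x) * (Real.exp (-x) * P x)
          ≤ ((1+η)*x) * (Real.exp (-x) * ((∑ l ∈ Finset.range (n+1), c l) * x^n)) := by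
            have he : (0:ℝ) < Real.exp (-x) := Real.exp_pos _
            have h2 : Real.exp (-x) * P x ≤ Real.exp (-x) * ((∑ l ∈ Finset.range (n+1), c l) * x^n) :=
              mul_le_mul_of_nonneg_left hPle he.le
            have h3 : 0 ≤ Real.exp (-x) * P x := by positivity
            nlinarith
        _ = ((1+η) * ∑ l ∈ Finset.range (n+1), c l) * (x^(n+1) * Real.exp (-x)) := by ring
    have hg : Filter.Tendsto (fun x : ℝ => ((1+η) * ∑ l ∈ Finset.range (n+1), c l) * (x^(n+1) * Real.exp (-x))) Filter.atTop (nhds 0) := by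
      have := (tendsto_pow_mul_exp_neg_atTop_nhds_zero (n+1)).const_mul ((1+η) * ∑ l ∈ Finset.range (n+1), c l)
      simpa using this
    exact tendsto_zero_iff_norm_tendsto_zero.mpr <| squeeze_zero' (Filter.Eventually.of_forall (fun x => norm_nonneg _)) hbd hg
  -- integrability
  have IntB : IntegrableOn (fun x : ℝ => Real.log (1 + η*x) * (x^n * Real.exp (-x))) (Set.Ioi 0) := by
    refine Integrable.mono ((powExpInt (n+1)).const_mul η) ?_ ?_
    · apply Measurable.aestronglyMeasurable
      exact (Real.measurable_log.comp ((measurable_id.const_mul η).const_add 1)).mul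
        ((measurable_id.pow_const n).mul measurable_id.neg.exp)
    · filter_upwards [ae_restrict_mem measurableSet_Ioi] with x hx
      simp only [Set.mem_Ioi] at hx
      have h1 : (1:ℝ) ≤ 1 + η*x := by nlinarith
      have hlognn : 0 ≤ Real.log (1 + η*x) := Real.log_nonneg h1
      have hlogle : Real.log (1 + η*x) ≤ η*x := by
        have := Real.log_le_sub_one_of_pos (by linarith : (0:ℝ) < 1 + η*x)
        linarith
      rw [Real.norm_eq_abs, Real.norm_eq_abs, abs_of_nonneg (by positivity),
        abs_of_nonneg (by positivity)]
      have he : (0:ℝ) < Real.exp (-x) := Real.exp_pos _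
      have hp : (0:ℝ) < x^n := pow_pos hx n
      calc Real.log (1 + η*x) * (x^n * Real.exp (-x)) ≤ (η*x) * (x^n * Real.exp (-x)) :=
            mul_le_mul_of_nonneg_right hlogle (by positivity)
        _ = η * (x^(n+1) * Real.exp (-x)) := by ring
  have IntS : IntegrableOn (fun x : ℝ => ∑ l ∈ Finset.range (n+1), c l * (x^l * Real.exp (-x)/(x+b))) (Set.Ioi 0) :=
    integrable_finset_sum _ (fun l _ => ((fracInt l hb).const_mul (c l)))
  have IntF' : IntegrableOn F' (Set.Ioi 0) := by
    rw [hF']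
    exact IntB.sub IntS
  have key : ∫ x in Set.Ioi (0:ℝ), F' x = 0 - F 0 :=
    integral_Ioi_of_hasDerivAt_of_tendsto' hderiv IntF' htend
  have hF0 : F 0 = 0 := by simp [hF]
  have hsplit2 : ∫ x in Set.Ioi (0:ℝ), F' x
      = (∫ x in Set.Ioi (0:ℝ), Real.log (1 + η*x) * (x^n * Real.exp (-x)))
        - ∫ x in Set.Ioi (0:ℝ), ∑ l ∈ Finset.range (n+1), c l * (x^l * Real.exp (-x)/(x+b)) := by
    simp only [hF']
    exact integral_sub IntB IntS
  have hS : ∫ x in Set.Ioi (0:ℝ), ∑ l ∈ Finset.range (n+1), c l * (x^l * Real.exp (-x)/(x+b))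
      = ∑ l ∈ Finset.range (n+1), c l * KK l b := by
    rw [integral_finset_sum _ (fun l _ => ((fracInt l hb).const_mul (c l)))]
    exact Finset.sum_congr rfl (fun l _ => by rw [integral_const_mul]; rfl)
  rw [hsplit2, hS, hF0, sub_zero, sub_eq_zero] at key
  exact key

lemma bracketEq (m : ℕ) {η : ℝ} (hη : 0 < η) :
    (-1:ℝ) ^ ((m:ℤ) - 1) * η ^ (-(m:ℤ)) * Real.exp (1/η) * negEi (1/η)
      + ∑ s ∈ Finset.Icc 1 m, (Nat.factorial (s-1) : ℝ) * (-η) ^ (-((m:ℤ) - (s:ℤ)))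
    = KK m (1/η) := by
  rw [KK_closed m (by positivity : (0:ℝ) < 1/η)]
  congr 1
  · congr 3
    rw [zpow_neg, zpow_natCast, ← inv_pow, one_div]
  · refine Finset.sum_congr rfl (fun s hs => ?_)
    simp only [Finset.mem_Icc] at hs
    congr 1
    rw [show -((m:ℤ) - s) = -((m - s : ℕ):ℤ) by push_cast [hs.2]; ring,
      zpow_neg, zpow_natCast, ← inv_pow]
    congr 1
    rw [one_div, neg_inv]

/-- Closed-form evaluation of the ergodic-rate integral over a Gamma(N,1)-distributed SNR. -/
theorem stmt10 (N : ℕ) (hN : 1 ≤ N) (η : ℝ) (hη : 0 < η) :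
    ∫ γ in Set.Ioi (0 : ℝ),
        Real.logb 2 (1 + η * γ) * γ ^ (N - 1) * Real.exp (-γ) / (Nat.factorial (N - 1) : ℝ)
      = Real.logb 2 (Real.exp 1) / (Nat.factorial (N - 1) : ℝ) *
          ∑ l ∈ Finset.range N,
            ((Nat.factorial (N - 1) : ℝ) / (Nat.factorial (N - 1 - l) : ℝ)) *
              ((-1 : ℝ) ^ ((N : ℤ) - (l : ℤ) - 2) * η ^ (-((N : ℤ) - 1 - (l : ℤ))) *
                  Real.exp (1 / η) * negEi (1 / η)
                + ∑ s ∈ Finset.Icc 1 (N - 1 - l),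
                    (Nat.factorial (s - 1) : ℝ) *
                      (-η) ^ (-((N : ℤ) - 1 - (l : ℤ) - (s : ℤ)))) := by
  obtain ⟨n, rfl⟩ : ∃ n, N = n + 1 := ⟨N - 1, by omega⟩
  simp only [Nat.add_sub_cancel]
  have hlog2 : Real.log 2 ≠ 0 := by
    have := Real.log_pos (by norm_num : (1:ℝ) < 2); linarith
  have hfac : (n.factorial : ℝ) ≠ 0 := Nat.cast_ne_zero.2 n.factorial_ne_zero
  -- left side
  have hL : ∫ γ in Set.Ioi (0 : ℝ),
        Real.logb 2 (1 + η * γ) * γ ^ n * Real.exp (-γ) / (n.factorial : ℝ)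
      = (1/(Real.log 2 * n.factorial)) *
          ∫ γ in Set.Ioi (0 : ℝ), Real.log (1 + η * γ) * (γ ^ n * Real.exp (-γ)) := by
    rw [← integral_const_mul]
    refine setIntegral_congr_fun measurableSet_Ioi (fun x _ => ?_)
    simp only [Real.logb]
    ring
  rw [hL, IBP n hη]
  -- right side brackets
  have hbr : ∀ l ∈ Finset.range (n+1),
      ((n.factorial : ℝ) / (Nat.factorial (n - l) : ℝ)) *
        ((-1 : ℝ) ^ (((n+1 : ℕ) : ℤ) - (l : ℤ) - 2) * η ^ (-(((n+1:ℕ) : ℤ) - 1 - (l : ℤ))) *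
            Real.exp (1 / η) * negEi (1 / η)
          + ∑ s ∈ Finset.Icc 1 (n - l),
              (Nat.factorial (s - 1) : ℝ) *
                (-η) ^ (-(((n+1:ℕ) : ℤ) - 1 - (l : ℤ) - (s : ℤ))))
      = ((n.factorial : ℝ) / (Nat.factorial (n - l) : ℝ)) * KK (n - l) (1/η) := by
    intro l hl
    simp only [Finset.mem_range] at hl
    have hln : l ≤ n := by omega
    congr 1
    rw [← bracketEq (n - l) hη]
    have e1 : ((n+1:ℕ) : ℤ) - (l : ℤ) - 2 = ((n - l : ℕ) : ℤ) - 1 := by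
      push_cast [hln]; ring
    have e2 : -(((n+1:ℕ) : ℤ) - 1 - (l : ℤ)) = -((n - l : ℕ) : ℤ) := by
      push_cast [hln]; ring
    rw [e1, e2]
    congr 1
    refine Finset.sum_congr rfl (fun s hs => ?_)
    congr 2
    push_cast [hln]; ring
  rw [Finset.sum_congr rfl hbr]
  -- reindex
  have hre := Finset.sum_range_reflect
    (fun l => ((n.factorial : ℝ) / (Nat.factorial l : ℝ)) * KK l (1/η)) (n+1)
  simp only [Nat.add_sub_cancel] at hre
  rw [hre]
  rw [Real.logb, Real.log_exp]
  rw [Finset.mul_sum, Finset.mul_sum]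
  refine Finset.sum_congr rfl (fun l _ => ?_)
  field_simp
end

section
/- Let N_r ≥ 1 be an integer and let η₁ > η₂ > 0. Then ∫₀^∞ [ log₂(1 + η₁ γ) − log₂(1 + η₂ γ) ] · γ^{N_r−1} e^{−γ} / (N_r−1)! dγ = Σ_{t=1}^{2} (−1)^{t−1} · (log₂ e / (N_r−1)!) · Σ_{λ=0}^{N_r−1} ((N_r−1)!/(N_r−1−λ)!) · [ (−1)^{N_r−λ−2} · η_t^{−(N_r−1−λ)} · e^{1/η_t} · Ei(−1/η_t) + Σ_{ς=1}^{N_r−1−λ} (ς−1)! · (−η_t)^{−(N_r−1−λ−ς)} ]. (The closed-form ergodic capacity of an intra-cell NOMA user in SSK-NOMA, where η₁ = Σ_{p=i}^{L} a_p ρ σ_i² and η₂ = Σ_{p=i+1}^{L} a_p ρ σ_i², Eqs. (39)–(40).) -/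
open MeasureTheory Real Finset

open Set Filter Topology

noncomputable def Phi (x : ℝ) : ℝ := ∫ t in Ioi x, rexp (-t) / t

lemma negEi_eq (x : ℝ) : negEi x = -Phi x := rfl

noncomputable def Jint (η : ℝ) (n : ℕ) : ℝ := ∫ γ in Ioi 0, γ ^ n * rexp (-γ) / (1 + η * γ)

noncomputable def Iint (η : ℝ) (n : ℕ) : ℝ :=
  ∫ γ in Ioi 0, Real.log (1 + η * γ) * γ ^ n * rexp (-γ)


lemma intPowExp (n : ℕ) : IntegrableOn (fun x : ℝ => x ^ n * rexp (-x)) (Ioi 0) := by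
  have h := Real.GammaIntegral_convergent (s := (n : ℝ) + 1) (by positivity)
  refine h.congr_fun (fun x hx => ?_) measurableSet_Ioi
  simp only [add_sub_cancel_right, Real.rpow_natCast]; rw [mul_comm]

lemma intPow (n : ℕ) : ∫ x in Ioi (0:ℝ), x ^ n * rexp (-x) = n.factorial := by
  rw [← Real.Gamma_nat_eq_factorial, Real.Gamma_eq_integral (by positivity : (0:ℝ) < n + 1)]
  refine setIntegral_congr_fun measurableSet_Ioi (fun x hx => ?_)
  simp only [add_sub_cancel_right, Real.rpow_natCast]; rw [mul_comm]

lemma Jmeas {η : ℝ} (hη : 0 < η) (n : ℕ) :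
    AEStronglyMeasurable (fun γ : ℝ => γ ^ n * rexp (-γ) / (1 + η * γ))
      (volume.restrict (Ioi 0)) := by
  refine ContinuousOn.aestronglyMeasurable ?_ measurableSet_Ioi
  refine ContinuousOn.div (by fun_prop) (by fun_prop) (fun x hx => ?_)
  have : (0:ℝ) < x := hx
  positivity

lemma Jintegrable {η : ℝ} (hη : 0 < η) (n : ℕ) :
    IntegrableOn (fun γ : ℝ => γ ^ n * rexp (-γ) / (1 + η * γ)) (Ioi 0) := by
  refine Integrable.mono' (intPowExp n) (Jmeas hη n) ?_
  filter_upwards [ae_restrict_mem measurableSet_Ioi] with γ hγ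
  have hγ0 : (0:ℝ) < γ := hγ
  have h1 : (1:ℝ) ≤ 1 + η * γ := by nlinarith
  rw [Real.norm_eq_abs, abs_div, abs_of_nonneg (by positivity), abs_of_nonneg (by positivity)]
  rw [div_le_iff₀ (by linarith)]
  nlinarith [mul_le_mul_of_nonneg_left h1 (show (0:ℝ) ≤ γ ^ n * rexp (-γ) by positivity)]

lemma logle {η γ : ℝ} (hη : 0 < η) (hγ : 0 < γ) :
    Real.log (1 + η * γ) ≤ η * γ ∧ 0 ≤ Real.log (1 + η * γ) := by
  constructor
  · have := Real.log_le_sub_one_of_pos (x := 1 + η * γ) (by nlinarith)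
    linarith
  · exact Real.log_nonneg (by nlinarith)

lemma Imeas {η : ℝ} (hη : 0 < η) (n : ℕ) :
    AEStronglyMeasurable (fun γ : ℝ => Real.log (1 + η * γ) * γ ^ n * rexp (-γ))
      (volume.restrict (Ioi 0)) := by
  refine ContinuousOn.aestronglyMeasurable ?_ measurableSet_Ioi
  refine ContinuousOn.mul (ContinuousOn.mul ?_ (by fun_prop)) (by fun_prop)
  refine ContinuousOn.log (by fun_prop) (fun x hx => ?_)
  have : (0:ℝ) < x := hx
  positivity

lemma Iintegrable {η : ℝ} (hη : 0 < η) (n : ℕ) :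
    IntegrableOn (fun γ : ℝ => Real.log (1 + η * γ) * γ ^ n * rexp (-γ)) (Ioi 0) := by
  refine Integrable.mono' ((intPowExp (n+1)).const_mul η) (Imeas hη n) ?_
  filter_upwards [ae_restrict_mem measurableSet_Ioi] with γ hγ
  have hγ0 : (0:ℝ) < γ := hγ
  obtain ⟨h1, h2⟩ := logle hη hγ0
  rw [Real.norm_eq_abs, abs_of_nonneg (by positivity)]
  have : γ ^ (n+1) = γ * γ ^ n := by ring
  rw [this]
  nlinarith [mul_le_mul_of_nonneg_right h1 (show (0:ℝ) ≤ γ ^ n * rexp (-γ) by positivity)]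

lemma PhiIntegrable {x : ℝ} (hx : 0 < x) :
    IntegrableOn (fun t : ℝ => rexp (-t) / t) (Ioi x) := by
  have hb : IntegrableOn (fun t : ℝ => x⁻¹ * rexp (-t)) (Ioi x) := by
    have := (exp_neg_integrableOn_Ioi x (one_pos)).const_mul x⁻¹
    simp at this; exact this
  refine Integrable.mono' hb ?_ ?_
  · refine ContinuousOn.aestronglyMeasurable ?_ measurableSet_Ioi
    refine ContinuousOn.div (by fun_prop) (by fun_prop) (fun t ht => ?_)
    exact (lt_trans hx ht).ne'
  · filter_upwards [ae_restrict_mem measurableSet_Ioi] with t ht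
    have hxt : x < t := ht
    have ht0 : 0 < t := lt_trans hx hxt
    rw [Real.norm_eq_abs, abs_of_nonneg (by positivity)]
    rw [div_le_iff₀ ht0, mul_comm x⁻¹, mul_assoc]
    have h1 : (1:ℝ) ≤ x⁻¹ * t := by
      rw [inv_mul_eq_div, le_div_iff₀ hx]; linarith
    nlinarith [Real.exp_pos (-t)]

lemma PhiDeriv {x : ℝ} (hx : 0 < x) :
    HasDerivAt Phi (-(rexp (-x) / x)) x := by
  set f : ℝ → ℝ := fun t => rexp (-t) / t with hf
  set a := x / 2 with ha
  have ha0 : 0 < a := by positivity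
  have hax : a < x := by simp [ha]; linarith
  have hint : IntegrableOn f (Ioi a) := PhiIntegrable ha0
  have key : ∀ y, a < y → Phi y = Phi a - ∫ t in a..y, f t := by
    intro y hy
    rw [intervalIntegral.integral_of_le hy.le]
    have hsplit : (∫ t in Ioc a y, f t) + ∫ t in Ioi y, f t = ∫ t in Ioi a, f t := by
      rw [← setIntegral_union (Ioc_disjoint_Ioi le_rfl) measurableSet_Ioi
        (hint.mono_set Ioc_subset_Ioi_self) (hint.mono_set (Ioi_subset_Ioi hy.le)),
        Ioc_union_Ioi_eq_Ioi hy.le]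
    unfold Phi
    linarith [hsplit]
  have hg : HasDerivAt (fun y => Phi a - ∫ t in a..y, f t) (-(rexp (-x) / x)) x := by
    have hd : HasDerivAt (fun y => ∫ t in a..y, f t) (f x) x := by
      refine intervalIntegral.integral_hasDerivAt_right ?_ ?_ ?_
      · rw [intervalIntegrable_iff_integrableOn_Ioc_of_le hax.le]
        exact hint.mono_set Ioc_subset_Ioi_self
      · refine ⟨Ioi a, Ioi_mem_nhds hax, ?_⟩
        refine ContinuousOn.aestronglyMeasurable ?_ measurableSet_Ioi
        refine ContinuousOn.div (by fun_prop) (by fun_prop) (fun t ht => ?_)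
        exact (lt_trans ha0 ht).ne'
      · exact ContinuousAt.div (by fun_prop) continuousAt_id (ne_of_gt hx)
    simpa using (hd.const_sub (Phi a))
  refine hg.congr_of_eventuallyEq ?_
  filter_upwards [Ioi_mem_nhds hax] with y hy
  exact key y hy

lemma PhiTendsto : Tendsto Phi atTop (𝓝 0) := by
  have h1 : ∀ᶠ x in atTop, 0 ≤ Phi x := by
    filter_upwards [eventually_gt_atTop (0:ℝ)] with x hx
    refine setIntegral_nonneg measurableSet_Ioi (fun t ht => ?_)
    have : 0 < t := lt_trans hx ht
    positivity
  have h2 : ∀ᶠ x in atTop, Phi x ≤ rexp (-x) := by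
    filter_upwards [eventually_ge_atTop (1:ℝ)] with x hx
    have : Phi x ≤ ∫ t in Ioi x, rexp (-t) := by
      refine setIntegral_mono_on (PhiIntegrable (by linarith)) ?_ measurableSet_Ioi ?_
      · exact (exp_neg_integrableOn_Ioi x one_pos).congr_fun
          (fun t ht => by simp) measurableSet_Ioi
      · intro t ht
        have ht1 : 1 ≤ t := le_trans hx (le_of_lt ht)
        rw [div_le_iff₀ (by linarith)]
        nlinarith [Real.exp_pos (-t)]
    rwa [integral_exp_neg_Ioi] at this
  have hexp : Tendsto (fun x : ℝ => rexp (-x)) atTop (𝓝 0) := by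
    simpa using Real.tendsto_exp_neg_atTop_nhds_zero
  exact tendsto_of_tendsto_of_tendsto_of_le_of_le' tendsto_const_nhds hexp h1 h2

lemma J0 {η : ℝ} (hη : 0 < η) : η * Jint η 0 = rexp (1/η) * Phi (1/η) := by
  have hη' : (0:ℝ) < 1/η := by positivity
  set F : ℝ → ℝ := fun γ => -(rexp (1/η) * Phi (γ + 1/η)) with hF
  have hder : ∀ γ : ℝ, 0 ≤ γ → HasDerivAt F (η * (γ ^ 0 * rexp (-γ) / (1 + η * γ))) γ := by
    intro γ hγ
    have h1 : HasDerivAt (fun y : ℝ => y + 1/η) 1 γ := (hasDerivAt_id γ).add_const _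
    have h2 : HasDerivAt (fun y : ℝ => Phi (y + 1/η))
        (-(rexp (-(γ + 1/η)) / (γ + 1/η))) γ := by
      have := (PhiDeriv (x := γ + 1/η) (by linarith)).comp γ h1
      simp at this ⊢; exact this
    have h3 := ((h2.const_mul (rexp (1/η))).neg)
    convert h3 using 1
    iterate 3 rfl
    have hpos : (0:ℝ) < 1 + η * γ := by nlinarith
    have hexp : rexp (1/η) * rexp (-(γ + 1/η)) = rexp (-γ) := by
      rw [← Real.exp_add]; ring_nf
    have h4 : γ + 1/η = (1 + η*γ)/η := by field_simp; ring
    rw [show -(rexp (1/η) * -(rexp (-(γ + 1/η)) / (γ + 1/η)))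
        = (rexp (1/η) * rexp (-(γ + 1/η))) / (γ + 1/η) by ring, hexp, h4]
    rw [pow_zero, one_mul, div_div_eq_mul_div]
    field_simp
  have hm : Tendsto F atTop (𝓝 0) := by
    have : Tendsto (fun γ : ℝ => Phi (γ + 1/η)) atTop (𝓝 0) :=
      PhiTendsto.comp (tendsto_atTop_add_const_right atTop _ tendsto_id)
    have := (this.const_mul (rexp (1/η))).neg
    simpa [hF, one_div] using this
  have := integral_Ioi_of_hasDerivAt_of_tendsto
    (f := F) (f' := fun γ => η * (γ ^ 0 * rexp (-γ) / (1 + η * γ))) (a := 0) (m := 0)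
    (hder 0 le_rfl).continuousAt.continuousWithinAt
    (fun x hx => hder x (le_of_lt hx))
    ((Jintegrable hη 0).const_mul η) hm
  rw [MeasureTheory.integral_const_mul] at this
  rw [hF] at this
  simp only [zero_add] at this
  rw [Jint, this]
  ring

lemma Jrec {η : ℝ} (hη : 0 < η) (n : ℕ) :
    η * Jint η (n + 1) + Jint η n = n.factorial := by
  have h1 : η * Jint η (n+1) = ∫ γ in Ioi 0, η * (γ ^ (n+1) * rexp (-γ) / (1 + η * γ)) := by
    rw [MeasureTheory.integral_const_mul]; rfl
  rw [h1, Jint, ← MeasureTheory.integral_add ((Jintegrable hη (n+1)).const_mul η)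
    (Jintegrable hη n), ← intPow n]
  refine setIntegral_congr_fun measurableSet_Ioi (fun γ hγ => ?_)
  have hγ0 : (0:ℝ) < γ := hγ
  have hpos : (0:ℝ) < 1 + η * γ := by nlinarith
  field_simp
  ring

lemma Gtendsto {η : ℝ} (hη : 0 < η) (k : ℕ) :
    Tendsto (fun γ : ℝ => Real.log (1 + η * γ) * γ ^ k * rexp (-γ)) atTop (𝓝 0) := by
  have hup : Tendsto (fun γ : ℝ => η * (γ ^ (k+1) * rexp (-γ))) atTop (𝓝 0) := by
    have := (tendsto_pow_mul_exp_neg_atTop_nhds_zero (k+1)).const_mul η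
    simpa using this
  refine tendsto_of_tendsto_of_tendsto_of_le_of_le' tendsto_const_nhds hup ?_ ?_
  · filter_upwards [eventually_gt_atTop (0:ℝ)] with γ hγ
    have h2 : (0:ℝ) ≤ Real.log (1 + η * γ) := Real.log_nonneg (by nlinarith)
    positivity
  · filter_upwards [eventually_gt_atTop (0:ℝ)] with γ hγ
    have h1 : Real.log (1 + η * γ) ≤ η * γ := by
      have := Real.log_le_sub_one_of_pos (x := 1 + η * γ) (by nlinarith)
      linarith
    have h3 : γ ^ (k+1) = γ * γ ^ k := by ring
    rw [h3]
    nlinarith [mul_le_mul_of_nonneg_right h1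
      (show (0:ℝ) ≤ γ ^ k * rexp (-γ) by positivity)]

lemma hasDeriv_aux {η : ℝ} (hη : 0 < η) (k : ℕ) {γ : ℝ} (hγ : 0 ≤ γ) :
    HasDerivAt (fun γ : ℝ => -(Real.log (1 + η * γ) * γ ^ k * rexp (-γ)))
      (Real.log (1 + η * γ) * γ ^ k * rexp (-γ)
        - (k : ℝ) * (Real.log (1 + η * γ) * γ ^ (k-1) * rexp (-γ))
        - η * (γ ^ k * rexp (-γ) / (1 + η * γ))) γ := by
  have hpos : (0:ℝ) < 1 + η * γ := by nlinarith
  have hlog : HasDerivAt (fun γ : ℝ => Real.log (1 + η * γ)) (η / (1 + η * γ)) γ := by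
    have h0 : HasDerivAt (fun γ : ℝ => 1 + η * γ) η γ := by
      simpa using ((hasDerivAt_id γ).const_mul η).const_add 1
    simpa using h0.log (ne_of_gt hpos)
  have hexp : HasDerivAt (fun γ : ℝ => rexp (-γ)) (-rexp (-γ)) γ := by
    simpa using ((hasDerivAt_id γ).neg).exp
  have hpow : HasDerivAt (fun γ : ℝ => γ ^ k) ((k : ℝ) * γ ^ (k-1)) γ := by
    simpa using hasDerivAt_pow k γ
  have := ((hlog.mul hpow).mul hexp).neg
  convert this using 1
  iterate 3 rfl
  field_simp
  simp only [Pi.mul_apply]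
  ring

lemma Irec {η : ℝ} (hη : 0 < η) (k : ℕ) :
    Iint η k = (k : ℝ) * Iint η (k - 1) + η * Jint η k := by
  have hC := Iintegrable hη k
  have hD' := Iintegrable hη (k-1)
  have hA := Jintegrable hη k
  have hD : IntegrableOn (fun γ : ℝ =>
      (k : ℝ) * (Real.log (1 + η * γ) * γ ^ (k-1) * rexp (-γ))) (Ioi 0) := hD'.const_mul _
  have hA' : IntegrableOn (fun γ : ℝ =>
      η * (γ ^ k * rexp (-γ) / (1 + η * γ))) (Ioi 0) := hA.const_mul _
  have hCD : IntegrableOn (fun γ : ℝ => Real.log (1 + η * γ) * γ ^ k * rexp (-γ)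
      - (k : ℝ) * (Real.log (1 + η * γ) * γ ^ (k-1) * rexp (-γ))) (Ioi 0) := hC.sub hD
  have hint : IntegrableOn (fun γ : ℝ => Real.log (1 + η * γ) * γ ^ k * rexp (-γ)
      - (k : ℝ) * (Real.log (1 + η * γ) * γ ^ (k-1) * rexp (-γ))
      - η * (γ ^ k * rexp (-γ) / (1 + η * γ))) (Ioi 0) := hCD.sub hA'
  have hm : Tendsto (fun γ : ℝ => -(Real.log (1 + η * γ) * γ ^ k * rexp (-γ)))
      atTop (𝓝 0) := by simpa using (Gtendsto hη k).neg
  have hFTC := integral_Ioi_of_hasDerivAt_of_tendsto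
    (f := fun γ : ℝ => -(Real.log (1 + η * γ) * γ ^ k * rexp (-γ)))
    (f' := fun γ : ℝ => Real.log (1 + η * γ) * γ ^ k * rexp (-γ)
      - (k : ℝ) * (Real.log (1 + η * γ) * γ ^ (k-1) * rexp (-γ))
      - η * (γ ^ k * rexp (-γ) / (1 + η * γ))) (a := 0) (m := 0)
    (hasDeriv_aux hη k le_rfl).continuousAt.continuousWithinAt
    (fun x hx => hasDeriv_aux hη k (le_of_lt hx)) hint hm
  rw [MeasureTheory.integral_sub hCD hA', MeasureTheory.integral_sub hC hD,
    MeasureTheory.integral_const_mul, MeasureTheory.integral_const_mul] at hFTC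
  simp only [mul_zero, add_zero, Real.log_one, zero_mul, neg_zero, neg_neg, sub_zero,
    zero_sub] at hFTC
  rw [Iint, Iint, Jint]
  linarith [hFTC]

noncomputable def bracket (η : ℝ) (m : ℕ) : ℝ :=
  (-1:ℝ) ^ ((m:ℤ) - 1) * η ^ (-(m:ℤ)) * rexp (1/η) * negEi (1/η)
    + ∑ s ∈ Finset.Icc 1 m, ((s-1).factorial : ℝ) * (-η) ^ ((s:ℤ) - (m:ℤ))

lemma bracket_rec {η : ℝ} (hη : 0 < η) (m : ℕ) :
    bracket η (m+1) = (m.factorial : ℝ) - bracket η m / η := by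
  have hη0 : η ≠ 0 := hη.ne'
  have hn : (-η) ≠ 0 := neg_ne_zero.mpr hη0
  unfold bracket
  rw [Finset.sum_Icc_succ_top (Nat.le_add_left 1 m)]
  push_cast
  rw [show ((m:ℤ) + 1 - 1 : ℤ) = (m:ℤ) by ring, show (-((m:ℤ) + 1) : ℤ) = -(m:ℤ) + -1 by ring,
      show ((m:ℤ) + 1 - ((m:ℤ) + 1) : ℤ) = 0 by ring]
  rw [zpow_add₀ hη0, zpow_zero, zpow_neg_one]
  have hsum : ∑ s ∈ Finset.Icc 1 m, ((s-1).factorial : ℝ) * (-η) ^ ((s:ℤ) - ((m:ℤ)+1))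
      = (∑ s ∈ Finset.Icc 1 m, ((s-1).factorial : ℝ) * (-η) ^ ((s:ℤ) - (m:ℤ))) * (-η)⁻¹ := by
    rw [Finset.sum_mul]
    refine Finset.sum_congr rfl (fun s hs => ?_)
    rw [show ((s:ℤ) - ((m:ℤ)+1)) = ((s:ℤ) - (m:ℤ)) + (-1) by ring, zpow_add₀ hn, zpow_neg_one, mul_assoc]
  have hone : (-1:ℝ) ^ (m:ℤ) = (-1:ℝ) ^ ((m:ℤ) - 1) * (-1) := by
    rw [← zpow_add_one₀ (by norm_num : (-1:ℝ) ≠ 0)]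
    norm_num
  rw [hsum, hone]
  rw [show (-η)⁻¹ = -η⁻¹ by rw [neg_inv]]
  field_simp
  ring

lemma bracket_eq {η : ℝ} (hη : 0 < η) (m : ℕ) : bracket η m = η * Jint η m := by
  induction m with
  | zero =>
    rw [J0 hη]
    unfold bracket
    norm_num [negEi_eq]
  | succ k ih =>
    rw [bracket_rec hη k, ih]
    have h := Jrec hη k
    field_simp
    linarith

lemma Iclosed {η : ℝ} (hη : 0 < η) (n : ℕ) :
    Iint η n = ∑ l ∈ Finset.range (n+1),
      ((n.factorial : ℝ) / (((n-l).factorial : ℕ) : ℝ)) * bracket η (n-l) := by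
  induction n with
  | zero =>
    have h1 := Irec hη 0
    norm_num at h1 ⊢
    rw [h1, ← bracket_eq hη 0]
  | succ n ih =>
    have h1 := Irec hη (n+1)
    simp only [Nat.add_sub_cancel, Nat.cast_add, Nat.cast_one] at h1
    rw [h1, ih, ← bracket_eq hη (n+1), Finset.sum_range_succ' _ (n+1)]
    congr 1
    · rw [Finset.mul_sum]
      refine Finset.sum_congr rfl (fun i hi => ?_)
      have h2 : (n+1) - (i+1) = n - i := by omega
      rw [h2, Nat.factorial_succ]
      push_cast
      ring
    · rw [Nat.sub_zero, div_self (by positivity : ((n+1).factorial : ℝ) ≠ 0), one_mul]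

lemma inner_eq (η : ℝ) (n l : ℕ) (hl : l ≤ n) :
    (-1 : ℝ) ^ (((n+1 : ℕ) : ℤ) - (l : ℤ) - 2) * η ^ (-(((n+1 : ℕ) : ℤ) - 1 - (l : ℤ))) *
        Real.exp (1 / η) * negEi (1 / η)
      + ∑ s ∈ Finset.Icc 1 (n - l),
          (Nat.factorial (s - 1) : ℝ) * (-η) ^ (-(((n+1 : ℕ) : ℤ) - 1 - (l : ℤ) - (s : ℤ)))
    = bracket η (n - l) := by
  unfold bracket
  rw [show (((n+1 : ℕ) : ℤ) - (l : ℤ) - 2) = (((n - l : ℕ) : ℤ) - 1) by push_cast; omega,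
    show (-(((n+1 : ℕ) : ℤ) - 1 - (l : ℤ))) = -((n - l : ℕ) : ℤ) by push_cast; omega]
  congr 1
  refine Finset.sum_congr rfl (fun s hs => ?_)
  rw [show (-(((n+1 : ℕ) : ℤ) - 1 - (l : ℤ) - (s : ℤ))) = ((s:ℤ) - ((n - l : ℕ) : ℤ)) by
    push_cast; omega]


/-- Closed-form ergodic capacity of an intra-cell NOMA user in SSK-NOMA (Eqs. (39)–(40)):
for `η₁ > η₂ > 0` (with `η₁ = ∑_{p=i}^{L} a_p ρ σ_i²` and `η₂ = ∑_{p=i+1}^{L} a_p ρ σ_i²`),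
`∫₀^∞ [log₂(1 + η₁γ) − log₂(1 + η₂γ)] γ^{N_r−1} e^{−γ} / (N_r−1)! dγ
 = ∑_{t=1}^{2} (−1)^{t−1} (log₂ e / (N_r−1)!) ∑_{λ=0}^{N_r−1} ((N_r−1)!/(N_r−1−λ)!)
     [ (−1)^{N_r−λ−2} η_t^{−(N_r−1−λ)} e^{1/η_t} Ei(−1/η_t)
       + ∑_{ς=1}^{N_r−1−λ} (ς−1)! (−η_t)^{−(N_r−1−λ−ς)} ]`,
where the index `t ∈ {1, 2}` is modelled by `Fin 2` (so `(−1)^{t−1} = (−1)^{(t : ℕ)}`). -/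
theorem stmt11 (Nr : ℕ) (hNr : 1 ≤ Nr) (η : Fin 2 → ℝ)
    (h12 : η 0 > η 1) (h2 : η 1 > 0) :
    ∫ γ in Set.Ioi (0 : ℝ),
        (Real.logb 2 (1 + η 0 * γ) - Real.logb 2 (1 + η 1 * γ)) *
          γ ^ (Nr - 1) * Real.exp (-γ) / (Nat.factorial (Nr - 1) : ℝ)
      = ∑ t : Fin 2, (-1 : ℝ) ^ (t : ℕ) *
          (Real.logb 2 (Real.exp 1) / (Nat.factorial (Nr - 1) : ℝ)) *
          ∑ l ∈ Finset.range Nr,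
            ((Nat.factorial (Nr - 1) : ℝ) / (Nat.factorial (Nr - 1 - l) : ℝ)) *
              ((-1 : ℝ) ^ ((Nr : ℤ) - (l : ℤ) - 2) * η t ^ (-((Nr : ℤ) - 1 - (l : ℤ))) *
                  Real.exp (1 / η t) * negEi (1 / η t)
                + ∑ s ∈ Finset.Icc 1 (Nr - 1 - l),
                    (Nat.factorial (s - 1) : ℝ) *
                      (-η t) ^ (-((Nr : ℤ) - 1 - (l : ℤ) - (s : ℤ)))) := by
  obtain ⟨n, rfl⟩ : ∃ n, Nr = n + 1 := ⟨Nr - 1, by omega⟩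
  have h1 : (0:ℝ) < η 1 := h2
  have h0 : (0:ℝ) < η 0 := lt_trans h1 h12
  have hlog2 : Real.log 2 ≠ 0 := ne_of_gt (Real.log_pos (by norm_num))
  have hfac : ((n.factorial : ℕ) : ℝ) ≠ 0 := by positivity
  simp only [Nat.add_sub_cancel]
  have hpt : ∀ γ : ℝ, (Real.logb 2 (1 + η 0 * γ) - Real.logb 2 (1 + η 1 * γ)) *
          γ ^ n * rexp (-γ) / (n.factorial : ℝ)
      = (Real.log 2 * (n.factorial : ℝ))⁻¹ *
          (Real.log (1 + η 0 * γ) * γ ^ n * rexp (-γ)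
            - Real.log (1 + η 1 * γ) * γ ^ n * rexp (-γ)) := by
    intro γ
    rw [Real.logb, Real.logb]
    field_simp
  simp only [hpt]
  rw [MeasureTheory.integral_const_mul,
    MeasureTheory.integral_sub (Iintegrable h0 n) (Iintegrable h1 n)]
  have hsum : ∀ t : Fin 2, 0 < η t →
      (∑ l ∈ Finset.range (n+1),
        ((n.factorial : ℝ) / ((n - l).factorial : ℝ)) *
          ((-1 : ℝ) ^ (((n+1:ℕ) : ℤ) - (l : ℤ) - 2) * η t ^ (-(((n+1:ℕ) : ℤ) - 1 - (l : ℤ))) *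
              Real.exp (1 / η t) * negEi (1 / η t)
            + ∑ s ∈ Finset.Icc 1 (n - l),
                (Nat.factorial (s - 1) : ℝ) *
                  (-η t) ^ (-(((n+1:ℕ) : ℤ) - 1 - (l : ℤ) - (s : ℤ)))))
      = Iint (η t) n := by
    intro t ht
    rw [Iclosed ht n]
    refine Finset.sum_congr rfl (fun l hl => ?_)
    rw [inner_eq (η t) n l (Finset.mem_range_succ_iff.mp hl)]
  rw [Fin.sum_univ_two, hsum 0 h0, hsum 1 h1]
  simp only [Fin.val_zero, Fin.val_one, pow_zero, pow_one, one_mul, neg_one_mul]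
  rw [Real.logb, Real.log_exp]
  field_simp
  simp only [Iint]
  ring
end
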